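/- arXiv:1206.0598 — 4 statements merged into one kernel-verified Lean document; each statement's English description precedes it below -/
import Mathlib

section
/- Fix d ≥ 1, a tuple n = (n_1,…,n_d) of positive integers, and ρ ∈ [d]. Let γ = (γ_{s,t,i})_{s,t∈[d], i∈[n_t]} be a tuple of nonnegative integers, and let γ* be defined by γ*_{s,t,1} = Σ_{i∈[n_t]} γ_{s,t,i} and γ*_{s,t,i} = 0 for all i ≠ 1. Then |T_{ρ,γ}| = |T_{ρ,γ*}| · ∏_{s,t∈[d]} ( γ*_{s,t,1}! / (γ_{s,t,1}!·γ_{s,t,2}!·⋯·γ_{s,t,n_t}!) ). -/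
open scoped Classical

/-- The vertex set of multitype Cayley trees of profile `n`: the vertex `⟨t, i⟩`
has type `t` and label `i`. -/
abbrev Vtx (d : ℕ) (n : Fin d → ℕ) := Σ t : Fin d, Fin (n t)

/-- A rooted multitype Cayley tree of profile `n`, encoded by the pair consisting of
its root vertex and its parent function (edges are oriented toward the root): the
root is a fixed point of the parent function and every vertex eventually reaches
the root by iterating it. -/
def MTree (d : ℕ) (n : Fin d → ℕ) : Type :=
  {p : Vtx d n × (Vtx d n → Vtx d n) //
    p.2 p.1 = p.1 ∧ ∀ v, ∃ k, p.2^[k] v = p.1}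

namespace MTree

variable {d : ℕ} {n : Fin d → ℕ}

/-- The root vertex of a rooted multitype Cayley tree. -/
def root (T : MTree d n) : Vtx d n := T.1.1

/-- The parent function of a rooted multitype Cayley tree. -/
def parent (T : MTree d n) : Vtx d n → Vtx d n := T.1.2

/-- `T.ch s w` is the number of children of type `s` of the vertex `w` in `T`. -/
noncomputable def ch (T : MTree d n) (s : Fin d) (w : Vtx d n) : ℕ :=
  Nat.card {v : Vtx d n // v.1 = s ∧ v ≠ T.root ∧ T.parent v = w}

/-- `T.etype s t` is the number of edges of type `(s,t)` of `T`, i.e. edges going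
from a vertex of type `s` to a vertex of type `t` (edges oriented toward the root). -/
noncomputable def etype (T : MTree d n) (s t : Fin d) : ℕ :=
  Nat.card {v : Vtx d n // v ≠ T.root ∧ v.1 = s ∧ (T.parent v).1 = t}

end MTree

/-- `Cay d ρ` is the set of (unitype) Cayley trees with vertex set `Fin d`, rooted at
`ρ` and oriented toward the root, encoded by parent functions: the oriented edges of
`A` are the pairs `(s, A.1 s)` for `s ≠ ρ`. -/
def Cay (d : ℕ) (ρ : Fin d) : Type :=
  {f : Fin d → Fin d // f ρ = ρ ∧ ∀ v, ∃ k, f^[k] v = ρ}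

noncomputable instance (d : ℕ) (n : Fin d → ℕ) : Fintype (MTree d n) :=
  Subtype.fintype _

noncomputable instance (d : ℕ) (ρ : Fin d) : Fintype (Cay d ρ) :=
  Subtype.fintype _

namespace Aux

variable {d : ℕ} {n : Fin d → ℕ}

/-- reachability under iteration -/
def Reach (f : Vtx d n → Vtx d n) (a b : Vtx d n) : Prop := ∃ k, f^[k] a = b

lemma reach_refl (f : Vtx d n → Vtx d n) (a : Vtx d n) : Reach f a a := ⟨0, rfl⟩

lemma reach_step {f : Vtx d n → Vtx d n} {a b : Vtx d n} (h : Reach f (f a) b) :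
    Reach f a b := by
  obtain ⟨k, hk⟩ := h
  exact ⟨k + 1, by rw [Function.iterate_succ_apply]; exact hk⟩

lemma reach_trans {f : Vtx d n → Vtx d n} {a b c : Vtx d n}
    (h1 : Reach f a b) (h2 : Reach f b c) : Reach f a c := by
  obtain ⟨k, hk⟩ := h1; obtain ⟨m, hm⟩ := h2
  exact ⟨m + k, by rw [Function.iterate_add_apply, hk]; exact hm⟩

def IsTree (r : Vtx d n) (f : Vtx d n → Vtx d n) : Prop :=
  f r = r ∧ ∀ v, ∃ k, f^[k] v = r

lemma isTree_reach {r : Vtx d n} {f : Vtx d n → Vtx d n} (h : IsTree r f) (v : Vtx d n) :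
    Reach f v r := h.2 v

/-- no nontrivial cycles in a tree -/
lemma no_cycle {r : Vtx d n} {f : Vtx d n → Vtx d n} (h : IsTree r f)
    {k : ℕ} (hk : 0 < k) {v : Vtx d n} (hv : f^[k] v = v) : v = r := by
  obtain ⟨m, hm⟩ := h.2 v
  have key : ∀ q : ℕ, f^[k * q] v = v := by
    intro q
    induction q with
    | zero => simp
    | succ q ih =>
      rw [Nat.mul_succ, Function.iterate_add_apply, hv, ih]
  have hkm : k * m ≥ m := Nat.le_mul_of_pos_left m hk
  have : f^[k * m] v = f^[k * m - m] (f^[m] v) := by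
    rw [← Function.iterate_add_apply]
    congr 1
    omega
  rw [key m, hm, Function.iterate_fixed h.1] at this
  exact this

/-- the parent of a non-root vertex does not reach it back -/
lemma not_reach_back {r : Vtx d n} {f : Vtx d n → Vtx d n} (h : IsTree r f)
    {c : Vtx d n} (hc : c ≠ r) : ¬ Reach f (f c) c := by
  rintro ⟨k, hk⟩
  exact hc (no_cycle h (k := k + 1) (Nat.succ_pos k)
    (by rw [Function.iterate_succ_apply]; exact hk))

lemma iterate_agree {f g : Vtx d n → Vtx d n} {k : ℕ} {x : Vtx d n}
    (h : ∀ j, j < k → g (f^[j] x) = f (f^[j] x)) : g^[k] x = f^[k] x := by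
  induction k with
  | zero => rfl
  | succ k ih =>
    rw [Function.iterate_succ_apply', Function.iterate_succ_apply',
      ih (fun j hj => h j (hj.trans (Nat.lt_succ_self k))), h k (Nat.lt_succ_self k)]

/-- transfer of reachability along paths: if `g` agrees with `f` on every vertex
that lies on the `f`-path from `x` to `y` (except possibly `y`), then `y` is also
`g`-reachable. -/
lemma reach_transfer {f g : Vtx d n → Vtx d n} {x y : Vtx d n} (hxy : Reach f x y)
    (h : ∀ z, Reach f x z → Reach f z y → z ≠ y → g z = f z) : Reach g x y := by
  classical
  have hex : ∃ k, f^[k] x = y := hxy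
  set k := Nat.find hex with hkdef
  have hk : f^[k] x = y := Nat.find_spec hex
  refine ⟨k, ?_⟩
  rw [iterate_agree (f := f) (g := g) ?_]
  · exact hk
  · intro j hj
    have h1 : Reach f x (f^[j] x) := ⟨j, rfl⟩
    have h2 : Reach f (f^[j] x) y := ⟨k - j, by rw [← Function.iterate_add_apply]; rw [show k - j + j = k by omega]; exact hk⟩
    have h3 : f^[j] x ≠ y := fun hcon => Nat.find_min hex hj hcon
    exact h (f^[j] x) h1 h2 h3



/-- new root after moving a child of `u` to `w` -/
noncomputable def mR (u w r c : Vtx d n) (f : Vtx d n → Vtx d n) : Vtx d n :=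
  if Reach f w c then (if u = r then w else r) else r

/-- new marked child -/
noncomputable def mC (u w c : Vtx d n) (f : Vtx d n → Vtx d n) : Vtx d n :=
  if Reach f w c then (if w = c then u else c) else c

/-- new parent function -/
noncomputable def mF (u w r c : Vtx d n) (f : Vtx d n → Vtx d n) : Vtx d n → Vtx d n :=
  if Reach f w c then
    (fun x => if x = (if w = c then u else c) then w
      else if x = u then f w
      else if x = w then (if u = r then w else f u)
      else f x)
  else Function.update f c w

section Move

variable {r u w c : Vtx d n} {f : Vtx d n → Vtx d n}

lemma w_ne_r (Ht : IsTree r f) (hcr : c ≠ r) (hreach : Reach f w c) : w ≠ r := by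
  rintro rfl
  obtain ⟨k, hk⟩ := hreach
  rw [Function.iterate_fixed Ht.1] at hk
  exact hcr hk.symm

lemma u_ne_c (Ht : IsTree r f) (hcu : f c = u) (hcr : c ≠ r) : u ≠ c := by
  rintro rfl
  exact hcr (no_cycle Ht (k := 1) Nat.one_pos (by simpa using hcu))

lemma not_reach_u_c (Ht : IsTree r f) (hcu : f c = u) (hcr : c ≠ r) : ¬ Reach f u c :=
  hcu ▸ not_reach_back Ht hcr

lemma mF_generic (hreach : Reach f w c) {z : Vtx d n}
    (hz1 : z ≠ (if w = c then u else c)) (hz2 : z ≠ u) (hz3 : z ≠ w) :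
    mF u w r c f z = f z := by
  simp only [mF, if_pos hreach, if_neg hz1, if_neg hz2, if_neg hz3]

lemma mF_at_c' (hreach : Reach f w c) :
    mF u w r c f (if w = c then u else c) = w := by
  simp only [mF, if_pos hreach, eq_self_iff_true, if_true]

lemma mF_at_u (hreach : Reach f w c) (hwc : w ≠ c) (huc : u ≠ c) :
    mF u w r c f u = f w := by
  simp only [mF, if_pos hreach, if_neg hwc, if_neg huc, eq_self_iff_true, if_true]

lemma mF_at_w (hreach : Reach f w c) (huw : u ≠ w) (hwc' : w ≠ (if w = c then u else c)) :
    mF u w r c f w = (if u = r then w else f u) := by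
  simp only [mF, if_pos hreach, if_neg hwc', if_neg (Ne.symm huw), eq_self_iff_true, if_true]

lemma w_ne_c' (huw : u ≠ w) (hwc_or : w = c → u ≠ w) : w ≠ (if w = c then u else c) := by
  by_cases hwc : w = c
  · simp only [if_pos hwc]; exact fun h => (hwc_or hwc) h.symm
  · simp only [if_neg hwc]; exact hwc

/-- Case 2 treeness -/
lemma isTree_move2 (Ht : IsTree r f) (hcu : f c = u) (hcr : c ≠ r) (huw : u ≠ w)
    (hreach : Reach f w c) :
    IsTree (if u = r then w else r) (mF u w r c f) := by
  have hwr : w ≠ r := w_ne_r Ht hcr hreach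
  have huc : u ≠ c := u_ne_c Ht hcu hcr
  have hnuc : ¬ Reach f u c := not_reach_u_c Ht hcu hcr
  have hwc' : w ≠ (if w = c then u else c) := w_ne_c' huw (fun _ => huw)
  set g := mF u w r c f with hg
  set c' := (if w = c then u else c) with hc'
  -- generic agreement helper
  have hgen : ∀ z : Vtx d n, z ≠ c' → z ≠ u → z ≠ w → g z = f z := by
    intro z h1 h2 h3; exact mF_generic hreach h1 h2 h3
  have hPw : Reach g w (if u = r then w else r) := by
    by_cases hur : u = r
    · simp only [if_pos hur]; exact reach_refl g w
    · simp only [if_neg hur]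
      have hgw : g w = f u := by
        rw [hg, mF_at_w hreach huw hwc', if_neg hur]
      have hfu : Reach g (f u) r := by
        refine reach_transfer (Ht.2 (f u)) ?_
        intro z hz1 hz2 hzr
        refine hgen z ?_ ?_ ?_
        · intro hzc'
          by_cases hwc : w = c
          · rw [hc', if_pos hwc] at hzc'; subst hzc'
            exact not_reach_back Ht hur hz1
          · rw [hc', if_neg hwc] at hzc'; subst hzc'
            exact hnuc (reach_step hz1)
        · rintro rfl; exact not_reach_back Ht hur hz1
        · rintro rfl; exact hnuc (reach_step (reach_trans hz1 hreach))
      exact reach_step (hgw ▸ hfu)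
  have hgc' : g c' = w := mF_at_c' hreach
  have hPc' : Reach g c' (if u = r then w else r) := reach_step (hgc' ▸ hPw)
  have hPu : Reach g u (if u = r then w else r) := by
    by_cases hwc : w = c
    · have : c' = u := by rw [hc', if_pos hwc]
      exact this ▸ hPc'
    · have hgu : g u = f w := mF_at_u hreach hwc huc
      have h1 : Reach f (f w) c := by
        obtain ⟨k, hk⟩ := hreach
        match k, hk with
        | 0, hk => exact absurd hk hwc
        | (k+1), hk => exact ⟨k, by rwa [Function.iterate_succ_apply] at hk⟩
      have h2 : Reach g (f w) c := by
        refine reach_transfer h1 ?_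
        intro z hz1 hz2 hzc
        refine hgen z ?_ ?_ ?_
        · rw [hc', if_neg hwc]; exact hzc
        · rintro rfl; exact hnuc hz2
        · rintro rfl; exact not_reach_back Ht hwr hz1
      have hcc' : c = c' := by rw [hc', if_neg hwc]
      refine reach_step ?_
      rw [hgu]
      exact reach_trans h2 (hcc' ▸ hPc')
  have hProot : Reach g r (if u = r then w else r) := by
    by_cases hur : u = r
    · exact hur ▸ hPu
    · simp only [if_neg hur]; exact reach_refl g r
  constructor
  · -- fixed point
    by_cases hur : u = r
    · simp only [if_pos hur]
      rw [hg, mF_at_w hreach huw hwc', if_pos hur]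
    · simp only [if_neg hur]
      have h1 : r ≠ c' := by
        rw [hc']; by_cases hwc : w = c
        · rw [if_pos hwc]; exact Ne.symm hur
        · rw [if_neg hwc]; exact Ne.symm hcr
      rw [hgen r h1 (Ne.symm hur) (Ne.symm hwr), Ht.1]
  · intro v
    obtain ⟨k, hk⟩ := Ht.2 v
    clear hgc'
    induction k using Nat.strong_induction_on generalizing v with
    | _ k IH =>
      by_cases h1 : v = c'
      · exact h1 ▸ hPc'
      by_cases h2 : v = u
      · exact h2 ▸ hPu
      by_cases h3 : v = w
      · exact h3 ▸ hPw
      by_cases h4 : v = r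
      · exact h4 ▸ hProot
      · match k, hk with
        | 0, hk => exact absurd hk h4
        | (k+1), hk =>
          have hstep : g v = f v := hgen v h1 h2 h3
          have : Reach g (f v) (if u = r then w else r) :=
            IH k (Nat.lt_succ_self k) (f v) (by rwa [Function.iterate_succ_apply] at hk)
          exact reach_step (hstep ▸ this)

/-- Case 1 treeness -/
lemma isTree_move1 (Ht : IsTree r f) (hcr : c ≠ r) (hnreach : ¬ Reach f w c) :
    IsTree r (Function.update f c w) := by
  set g := Function.update f c w with hg
  have hPw : Reach g w r := by
    refine reach_transfer (Ht.2 w) ?_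
    intro z hz1 hz2 hzr
    have : z ≠ c := by rintro rfl; exact hnreach hz1
    exact Function.update_of_ne this _ _
  constructor
  · rw [hg, Function.update_of_ne (Ne.symm hcr), Ht.1]
  · intro v
    obtain ⟨k, hk⟩ := Ht.2 v
    induction k using Nat.strong_induction_on generalizing v with
    | _ k IH =>
      by_cases h1 : v = c
      · have hgc : g v = w := by rw [h1, hg]; exact Function.update_self _ _ _
        refine reach_step ?_
        rw [hgc]; exact hPw
      by_cases h4 : v = r
      · exact h4 ▸ reach_refl g r
      · match k, hk with
        | 0, hk => exact absurd hk h4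
        | (k+1), hk =>
          have hstep : g v = f v := by rw [hg]; exact Function.update_of_ne h1 _ _
          have : Reach g (f v) r :=
            IH k (Nat.lt_succ_self k) (f v) (by rwa [Function.iterate_succ_apply] at hk)
          exact reach_step (hstep ▸ this)

lemma isTree_move (Ht : IsTree r f) (hcu : f c = u) (hcr : c ≠ r) (huw : u ≠ w) :
    IsTree (mR u w r c f) (mF u w r c f) := by
  by_cases hreach : Reach f w c
  · rw [mR, if_pos hreach]
    exact isTree_move2 Ht hcu hcr huw hreach
  · rw [mR, if_neg hreach, mF, if_neg hreach]
    exact isTree_move1 Ht hcr hreach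

end Move
section Move
variable {r u w c : Vtx d n} {f : Vtx d n → Vtx d n}

lemma mR_eval_pos (h : Reach f w c) : mR u w r c f = if u = r then w else r := by
  simp only [mR, if_pos h]
lemma mR_eval_neg (h : ¬ Reach f w c) : mR u w r c f = r := by
  simp only [mR, if_neg h]
lemma mC_eval_pos (h : Reach f w c) : mC u w c f = if w = c then u else c := by
  simp only [mC, if_pos h]
lemma mC_eval_neg (h : ¬ Reach f w c) : mC u w c f = c := by
  simp only [mC, if_neg h]
lemma mF_eval_neg (h : ¬ Reach f w c) : mF u w r c f = Function.update f c w := by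
  simp only [mF, if_neg h]

/-- after a case-2 move, `u` reaches the new marked child -/
lemma case2_rev (Ht : IsTree r f) (hcu : f c = u) (hcr : c ≠ r) (huw : u ≠ w)
    (hreach : Reach f w c) :
    Reach (mF u w r c f) u (if w = c then u else c) := by
  have hwr : w ≠ r := w_ne_r Ht hcr hreach
  have huc : u ≠ c := u_ne_c Ht hcu hcr
  have hnuc : ¬ Reach f u c := not_reach_u_c Ht hcu hcr
  by_cases hwc : w = c
  · rw [if_pos hwc]; exact reach_refl _ u
  · rw [if_neg hwc]
    have hgu : mF u w r c f u = f w := mF_at_u hreach hwc huc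
    have h1 : Reach f (f w) c := by
      obtain ⟨k, hk⟩ := hreach
      match k, hk with
      | 0, hk => exact absurd hk hwc
      | (k+1), hk => exact ⟨k, by rwa [Function.iterate_succ_apply] at hk⟩
    have h2 : Reach (mF u w r c f) (f w) c := by
      refine reach_transfer h1 ?_
      intro z hz1 hz2 hzc
      refine mF_generic hreach ?_ ?_ ?_
      · rw [if_neg hwc]; exact hzc
      · rintro rfl; exact hnuc hz2
      · rintro rfl; exact not_reach_back Ht hwr hz1
    refine reach_step ?_
    rw [hgu]; exact h2

lemma case2_rev' (Ht : IsTree r f) (hcu : f c = u) (hcr : c ≠ r) (huw : u ≠ w)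
    (hreach : Reach f w c) :
    Reach (mF u w r c f) u (mC u w c f) := by
  rw [mC_eval_pos hreach]; exact case2_rev Ht hcu hcr huw hreach

/-- after a case-1 move, `u` does not reach the marked child -/
lemma case1_rev (Ht : IsTree r f) (hcu : f c = u) (hcr : c ≠ r)
    (hnreach : ¬ Reach f w c) : ¬ Reach (Function.update f c w) u c := by
  intro h
  refine not_reach_u_c Ht hcu hcr (reach_transfer h ?_)
  intro z _ _ hzc
  exact (Function.update_of_ne hzc _ _).symm

lemma hcpp (Ht : IsTree r f) (hcu : f c = u) (hcr : c ≠ r) (hreach : Reach f w c) :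
    (if u = mC u w c f then w else mC u w c f) = c := by
  have huc : u ≠ c := u_ne_c Ht hcu hcr
  rw [mC_eval_pos hreach]
  by_cases hwc : w = c
  · rw [if_pos hwc, if_pos rfl, hwc]
  · rw [if_neg hwc, if_neg huc]

lemma move_move_r (Ht : IsTree r f) (hcu : f c = u) (hcr : c ≠ r) (huw : u ≠ w) :
    mR w u (mR u w r c f) (mC u w c f) (mF u w r c f) = r := by
  by_cases hreach : Reach f w c
  · have hwr : w ≠ r := w_ne_r Ht hcr hreach
    have hrev : Reach (mF u w r c f) u (mC u w c f) := case2_rev' Ht hcu hcr huw hreach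
    rw [mR_eval_pos hrev, mR_eval_pos hreach]
    by_cases hur : u = r
    · rw [if_pos hur, if_pos rfl]; exact hur
    · rw [if_neg hur, if_neg hwr]
  · have hrev := case1_rev Ht hcu hcr hreach
    rw [mR_eval_neg hreach, mC_eval_neg hreach, mF_eval_neg hreach, mR_eval_neg hrev]

lemma move_move_c (Ht : IsTree r f) (hcu : f c = u) (hcr : c ≠ r) (huw : u ≠ w) :
    mC w u (mC u w c f) (mF u w r c f) = c := by
  by_cases hreach : Reach f w c
  · have hrev : Reach (mF u w r c f) u (mC u w c f) := case2_rev' Ht hcu hcr huw hreach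
    rw [mC_eval_pos hrev]
    exact hcpp Ht hcu hcr hreach
  · have hrev := case1_rev Ht hcu hcr hreach
    rw [mC_eval_neg hreach, mF_eval_neg hreach, mC_eval_neg hrev]

lemma move_move_f (Ht : IsTree r f) (hcu : f c = u) (hcr : c ≠ r) (huw : u ≠ w) :
    mF w u (mR u w r c f) (mC u w c f) (mF u w r c f) = f := by
  have huc : u ≠ c := u_ne_c Ht hcu hcr
  by_cases hreach : Reach f w c
  · have hwr : w ≠ r := w_ne_r Ht hcr hreach
    have hrev : Reach (mF u w r c f) u (mC u w c f) := case2_rev' Ht hcu hcr huw hreach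
    have hc'' := hcpp Ht hcu hcr hreach
    have hwc0 : w ≠ (if w = c then u else c) := w_ne_c' huw (fun _ => huw)
    funext x
    by_cases hx1 : x = c
    · have h := mF_at_c' (u := w) (w := u) (r := mR u w r c f) (c := mC u w c f)
        (f := mF u w r c f) hrev
      rw [hc''] at h
      rw [hx1, h, hcu]
    by_cases hx2 : x = w
    · have hwc : w ≠ c := fun h => hx1 (hx2.trans h)
      have hCc : mC u w c f = c := by rw [mC_eval_pos hreach, if_neg hwc]
      have h := mF_at_u (u := w) (w := u) (r := mR u w r c f) (c := mC u w c f)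
        (f := mF u w r c f) hrev (by rw [hCc]; exact huc) (by rw [hCc]; exact hwc)
      rw [hx2, h, mF_at_u hreach hwc huc]
    by_cases hx3 : x = u
    · have h := mF_at_w (u := w) (w := u) (r := mR u w r c f) (c := mC u w c f)
        (f := mF u w r c f) hrev (Ne.symm huw) (by rw [hc'']; exact huc)
      rw [hx3, h]
      by_cases hur : u = r
      · rw [mR_eval_pos hreach, if_pos hur, if_pos rfl, hur, Ht.1]
      · rw [mR_eval_pos hreach, if_neg hur, if_neg hwr,
          mF_at_w hreach huw hwc0, if_neg hur]
    · have h := mF_generic (u := w) (w := u) (r := mR u w r c f) (c := mC u w c f)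
        (f := mF u w r c f) hrev (by rw [hc'']; exact hx1) hx2 hx3
      rw [h]
      have hxc' : x ≠ (if w = c then u else c) := by
        by_cases hwc : w = c
        · rw [if_pos hwc]; exact hx3
        · rw [if_neg hwc]; exact hx1
      exact mF_generic hreach hxc' hx3 hx2
  · have hrev := case1_rev Ht hcu hcr hreach
    rw [mR_eval_neg hreach, mC_eval_neg hreach, mF_eval_neg hreach,
      mF_eval_neg hrev]
    funext x
    by_cases hx : x = c
    · rw [hx, Function.update_self, hcu]
    · rw [Function.update_of_ne hx, Function.update_of_ne hx]

end Move
section Move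
variable {r u w c : Vtx d n} {f : Vtx d n → Vtx d n}

/-- number of children of type `a` of vertex `b` -/
noncomputable def chS (r : Vtx d n) (f : Vtx d n → Vtx d n) (a : Fin d) (b : Vtx d n) : ℕ :=
  (Finset.univ.filter (fun v : Vtx d n => v.1 = a ∧ v ≠ r ∧ f v = b)).card

noncomputable def eSwap (u w c : Vtx d n) (f : Vtx d n → Vtx d n) : Equiv.Perm (Vtx d n) :=
  if Reach f w c then Equiv.swap u w else Equiv.refl _

lemma eSwap_invol (v : Vtx d n) : eSwap u w c f (eSwap u w c f v) = v := by
  unfold eSwap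
  by_cases h : Reach f w c
  · rw [if_pos h, Equiv.swap_apply_self]
  · rw [if_neg h]; rfl

lemma eSwap_fst (htw : u.1 = w.1) (v : Vtx d n) : (eSwap u w c f v).1 = v.1 := by
  unfold eSwap
  by_cases h : Reach f w c
  · rw [if_pos h]
    rcases Equiv.swap_apply_def u w v with _
    by_cases h1 : v = u
    · rw [h1, Equiv.swap_apply_left]; exact htw.symm
    by_cases h2 : v = w
    · rw [h2, Equiv.swap_apply_right]; exact htw
    · rw [Equiv.swap_apply_of_ne_of_ne h1 h2]
  · rw [if_neg h]; rfl

lemma eSwap_r (Ht : IsTree r f) (hcu : f c = u) (hcr : c ≠ r) :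
    eSwap u w c f r = mR u w r c f := by
  unfold eSwap
  by_cases h : Reach f w c
  · have hwr : w ≠ r := w_ne_r Ht hcr h
    rw [if_pos h, mR_eval_pos h]
    by_cases hur : u = r
    · rw [if_pos hur, hur, Equiv.swap_apply_left]
    · rw [if_neg hur, Equiv.swap_apply_of_ne_of_ne (Ne.symm hur) (Ne.symm hwr)]
  · rw [if_neg h, mR_eval_neg h]; rfl

lemma eSwap_c' (Ht : IsTree r f) (hcu : f c = u) (hcr : c ≠ r) (huw : u ≠ w) :
    eSwap u w c f (mC u w c f) = c := by
  have huc : u ≠ c := u_ne_c Ht hcu hcr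
  unfold eSwap
  by_cases h : Reach f w c
  · rw [if_pos h, mC_eval_pos h]
    by_cases hwc : w = c
    · rw [if_pos hwc, Equiv.swap_apply_left, hwc]
    · rw [if_neg hwc,
        Equiv.swap_apply_of_ne_of_ne (fun hh => huc hh.symm) (fun hh => hwc hh.symm)]
  · rw [if_neg h, mC_eval_neg h]; rfl

lemma eSwap_c (Ht : IsTree r f) (hcu : f c = u) (hcr : c ≠ r) (huw : u ≠ w) :
    eSwap u w c f c = mC u w c f := by
  have h := eSwap_c' (w := w) Ht hcu hcr huw
  have h2 := eSwap_invol (u := u) (w := w) (c := c) (f := f) (mC u w c f)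
  rw [h] at h2
  exact h2

lemma eSwap_r' (Ht : IsTree r f) (hcu : f c = u) (hcr : c ≠ r) :
    eSwap u w c f (mR u w r c f) = r := by
  have h := eSwap_r (w := w) Ht hcu hcr
  have h2 := eSwap_invol (u := u) (w := w) (c := c) (f := f) r
  rw [h] at h2
  exact h2

lemma mC_ne_mR (Ht : IsTree r f) (hcu : f c = u) (hcr : c ≠ r) (huw : u ≠ w) :
    mC u w c f ≠ mR u w r c f := by
  have huc : u ≠ c := u_ne_c Ht hcu hcr
  by_cases h : Reach f w c
  · have hwr : w ≠ r := w_ne_r Ht hcr h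
    rw [mC_eval_pos h, mR_eval_pos h]
    by_cases hwc : w = c
    · rw [if_pos hwc]
      by_cases hur : u = r
      · rw [if_pos hur]; exact huw
      · rw [if_neg hur]; exact hur
    · rw [if_neg hwc]
      by_cases hur : u = r
      · rw [if_pos hur]; exact fun hh => hwc hh.symm
      · rw [if_neg hur]; exact hcr
  · rw [mC_eval_neg h, mR_eval_neg h]; exact hcr

lemma mC_fst (htw : u.1 = w.1) : (mC u w c f).1 = c.1 := by
  by_cases h : Reach f w c
  · rw [mC_eval_pos h]
    by_cases hwc : w = c
    · rw [if_pos hwc, ← hwc]; exact htw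
    · rw [if_neg hwc]
  · rw [mC_eval_neg h]

lemma mR_fst (Ht : IsTree r f) (hcr : c ≠ r) (htw : u.1 = w.1) :
    (mR u w r c f).1 = r.1 := by
  by_cases h : Reach f w c
  · rw [mR_eval_pos h]
    by_cases hur : u = r
    · rw [if_pos hur, ← hur]; exact htw.symm
    · rw [if_neg hur]
  · rw [mR_eval_neg h]

lemma mF_mC (hreach? : True) (h2 : f c = u) : mF u w r c f (mC u w c f) = w := by
  by_cases h : Reach f w c
  · rw [mC_eval_pos h]; exact mF_at_c' h
  · rw [mC_eval_neg h, mF_eval_neg h, Function.update_self]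

/-- off the two special vertices, the new parent map is the old one twisted by the swap -/
lemma mF_off (Ht : IsTree r f) (hcu : f c = u) (hcr : c ≠ r) (huw : u ≠ w)
    {v : Vtx d n} (hv1 : v ≠ mR u w r c f) (hv2 : v ≠ mC u w c f) :
    mF u w r c f v = f (eSwap u w c f v) := by
  have huc : u ≠ c := u_ne_c Ht hcu hcr
  by_cases h : Reach f w c
  · rw [mC_eval_pos h] at hv2
    rw [mR_eval_pos h] at hv1
    unfold eSwap
    rw [if_pos h]
    by_cases h1 : v = u
    · have hwc : w ≠ c := by
        intro hwc
        rw [if_pos hwc] at hv2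
        exact hv2 h1
      rw [h1, Equiv.swap_apply_left, mF_at_u h hwc huc]
    by_cases h2 : v = w
    · have hur : u ≠ r := by
        intro hur
        rw [if_pos hur] at hv1
        exact hv1 h2
      rw [h2, Equiv.swap_apply_right, mF_at_w h huw (w_ne_c' huw (fun _ => huw)),
        if_neg hur]
    · rw [Equiv.swap_apply_of_ne_of_ne h1 h2]
      refine mF_generic h ?_ h1 h2
      exact hv2
  · rw [mC_eval_neg h] at hv2
    unfold eSwap
    rw [if_neg h, mF_eval_neg h, Equiv.refl_apply, Function.update_of_ne hv2]

/-- key count change -/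
lemma move_count (Ht : IsTree r f) (hcu : f c = u) (hcr : c ≠ r) (huw : u ≠ w)
    (htw : u.1 = w.1) (a : Fin d) (b : Vtx d n) :
    chS (mR u w r c f) (mF u w r c f) a b + (if a = c.1 ∧ b = u then 1 else 0)
      = chS r f a b + (if a = c.1 ∧ b = w then 1 else 0) := by
  classical
  set r' := mR u w r c f with hr'
  set c' := mC u w c f with hc'
  set f' := mF u w r c f with hf'
  set e := eSwap u w c f with he
  set S' : Finset (Vtx d n) :=
    Finset.univ.filter (fun v : Vtx d n => v.1 = a ∧ v ≠ r' ∧ f' v = b) with hS'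
  set S : Finset (Vtx d n) :=
    Finset.univ.filter (fun v : Vtx d n => v.1 = a ∧ v ≠ r ∧ f v = b) with hS
  have hdec : ∀ (T : Finset (Vtx d n)) (x : Vtx d n),
      T.card = (T.erase x).card + (if x ∈ T then 1 else 0) := by
    intro T x
    by_cases hx : x ∈ T
    · rw [if_pos hx, Finset.card_erase_add_one hx]
    · rw [if_neg hx, Finset.erase_eq_of_notMem hx, Nat.add_zero]
  have hmem' : c' ∈ S' ↔ (a = c.1 ∧ b = w) := by
    rw [hS', Finset.mem_filter]
    constructor
    · rintro ⟨-, h1, -, h3⟩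
      refine ⟨?_, ?_⟩
      · rw [← h1, hc', mC_fst htw]
      · rw [← h3, hc', hf', mF_mC trivial hcu]
    · rintro ⟨h1, h2⟩
      refine ⟨Finset.mem_univ _, ?_, ?_, ?_⟩
      · rw [hc', mC_fst htw, h1]
      · rw [hc', hr']; exact mC_ne_mR Ht hcu hcr huw
      · rw [h2, hc', hf']; exact mF_mC trivial hcu
  have hmem : c ∈ S ↔ (a = c.1 ∧ b = u) := by
    rw [hS, Finset.mem_filter]
    constructor
    · rintro ⟨-, h1, -, h3⟩
      exact ⟨h1.symm, by rw [← h3, hcu]⟩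
    · rintro ⟨h1, h2⟩
      exact ⟨Finset.mem_univ _, h1.symm, hcr, by rw [hcu, h2]⟩
  have hbij : ((S'.erase c').card = (S.erase c).card) := by
    refine Finset.card_bij (fun v _ => e v) ?_ ?_ ?_
    · intro v hv
      rw [Finset.mem_erase, hS', Finset.mem_filter] at hv
      obtain ⟨hvc', -, h1, h2, h3⟩ := hv
      rw [Finset.mem_erase, hS, Finset.mem_filter]
      refine ⟨?_, Finset.mem_univ _, ?_, ?_, ?_⟩
      · intro hec
        apply hvc'
        have := congrArg (e) hec
        rw [eSwap_invol, he, eSwap_c Ht hcu hcr huw] at this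
        rw [this, hc']
      · rw [he, eSwap_fst htw, h1]
      · intro her
        apply h2
        have := congrArg (e) her
        rw [eSwap_invol, he, eSwap_r Ht hcu hcr] at this
        rw [this, hr']
      · rw [← mF_off Ht hcu hcr huw h2 hvc']
        exact h3
    · intro v1 hv1 v2 hv2 hh
      have := congrArg (e) hh
      rwa [eSwap_invol, eSwap_invol] at this
    · intro y hy
      rw [Finset.mem_erase, hS, Finset.mem_filter] at hy
      obtain ⟨hyc, -, h1, h2, h3⟩ := hy
      have hy1 : e y ≠ r' := by
        intro hh
        apply h2
        have := congrArg (e) hh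
        rwa [eSwap_invol, he, eSwap_r' Ht hcu hcr] at this
      have hy2 : e y ≠ c' := by
        intro hh
        apply hyc
        have := congrArg (e) hh
        rwa [eSwap_invol, he, eSwap_c' Ht hcu hcr huw] at this
      refine ⟨e y, ?_, ?_⟩
      · rw [Finset.mem_erase, hS', Finset.mem_filter]
        refine ⟨hy2, Finset.mem_univ _, ?_, hy1, ?_⟩
        · rw [he, eSwap_fst htw, h1]
        · rw [hf', mF_off Ht hcu hcr huw hy1 hy2, he, eSwap_invol, h3]
      · exact eSwap_invol y
  have e1 : chS r' f' a b = (S'.erase c').card + (if a = c.1 ∧ b = w then 1 else 0) := by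
    rw [chS, ← hS', hdec S' c']
    congr 1
    by_cases hcond : a = c.1 ∧ b = w
    · rw [if_pos hcond, if_pos (hmem'.2 hcond)]
    · rw [if_neg hcond, if_neg (fun hh => hcond (hmem'.1 hh))]
  have e2 : chS r f a b = (S.erase c).card + (if a = c.1 ∧ b = u then 1 else 0) := by
    rw [chS, ← hS, hdec S c]
    congr 1
    by_cases hcond : a = c.1 ∧ b = u
    · rw [if_pos hcond, if_pos (hmem.2 hcond)]
    · rw [if_neg hcond, if_neg (fun hh => hcond (hmem.1 hh))]
  rw [e1, e2, hbij]
  ring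

end Move

lemma ch_card (T : MTree d n) (a : Fin d) (b : Vtx d n) :
    MTree.ch T a b = chS T.1.1 T.1.2 a b := by
  unfold MTree.ch chS MTree.root MTree.parent
  rw [Nat.card_eq_fintype_card, Fintype.card_subtype]

lemma card_pair {α β : Type*} [Fintype α] [Fintype β] (P : α → Prop) (Q : α → β → Prop)
    (m : ℕ) (hm : ∀ a, P a → Nat.card {b // Q a b} = m) :
    Nat.card {p : α × β // P p.1 ∧ Q p.1 p.2} = Nat.card {a // P a} * m := by
  classical
  rw [Nat.card_eq_fintype_card,
    Fintype.card_congr (Equiv.subtypeProdEquivSigmaSubtype (fun a b => P a ∧ Q a b)),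
    Fintype.card_sigma]
  have key : ∀ a : α, Fintype.card {b // P a ∧ Q a b} = if P a then m else 0 := by
    intro a
    by_cases hP : P a
    · rw [if_pos hP, ← hm a hP, Nat.card_eq_fintype_card]
      exact Fintype.card_congr
        (Equiv.subtypeEquivRight (fun b => ⟨fun h => h.2, fun h => ⟨hP, h⟩⟩))
    · rw [if_neg hP, Fintype.card_eq_zero_iff]
      exact ⟨fun x => absurd x.2.1 hP⟩
  rw [Finset.sum_congr rfl (fun a _ => key a), Finset.sum_ite, Finset.sum_const,
    Finset.sum_const_zero, add_zero, smul_eq_mul, Nat.card_eq_fintype_card,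
    Fintype.card_subtype]

section OneStep

variable {u w : Vtx d n}

/-- the moved tree -/
noncomputable def fwdT (u w : Vtx d n) (T : MTree d n) (c : Vtx d n)
    (hcu : T.1.2 c = u) (hcr : c ≠ T.1.1) (huw : u ≠ w) : MTree d n :=
  ⟨(mR u w T.1.1 c T.1.2, mF u w T.1.1 c T.1.2), isTree_move T.2 hcu hcr huw⟩

lemma fwdT_ch (T : MTree d n) (c : Vtx d n)
    (hcu : T.1.2 c = u) (hcr : c ≠ T.1.1) (huw : u ≠ w) (htw : u.1 = w.1)
    (a : Fin d) (b : Vtx d n) :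
    MTree.ch (fwdT u w T c hcu hcr huw) a b + (if a = c.1 ∧ b = u then 1 else 0)
      = MTree.ch T a b + (if a = c.1 ∧ b = w then 1 else 0) := by
  rw [ch_card, ch_card]
  exact move_count T.2 hcu hcr huw htw a b

lemma onestep (ρ s : Fin d) (u w : Vtx d n) (huw : u ≠ w) (htw : u.1 = w.1)
    (γ γ'' : Fin d → Vtx d n → ℕ)
    (hrel : ∀ a b, γ'' a b + (if a = s ∧ b = u then 1 else 0)
        = γ a b + (if a = s ∧ b = w then 1 else 0)) :
    Nat.card {T : MTree d n // T.root.1 = ρ ∧ ∀ a b, MTree.ch T a b = γ a b} * γ s u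
      = Nat.card {T : MTree d n // T.root.1 = ρ ∧ ∀ a b, MTree.ch T a b = γ'' a b}
          * γ'' s w := by
  classical
  rw [← card_pair (fun T : MTree d n => T.root.1 = ρ ∧ ∀ a b, MTree.ch T a b = γ a b)
    (fun T v => v.1 = s ∧ v ≠ T.root ∧ T.parent v = u) (γ s u)
    (fun T hT => by exact hT.2 s u)]
  rw [← card_pair (fun T : MTree d n => T.root.1 = ρ ∧ ∀ a b, MTree.ch T a b = γ'' a b)
    (fun T v => v.1 = s ∧ v ≠ T.root ∧ T.parent v = w) (γ'' s w)
    (fun T hT => by exact hT.2 s w)]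
  refine Nat.card_congr ?_
  refine
    { toFun := fun x =>
        ⟨(fwdT u w x.1.1 x.1.2 x.2.2.2.2 x.2.2.2.1 huw, mC u w x.1.2 x.1.1.1.2), ?_, ?_⟩
      invFun := fun y =>
        ⟨(fwdT w u y.1.1 y.1.2 y.2.2.2.2 y.2.2.2.1 (Ne.symm huw),
          mC w u y.1.2 y.1.1.1.2), ?_, ?_⟩
      left_inv := ?_
      right_inv := ?_ }
  · -- P of image (forward)
    constructor
    · exact (mR_fst x.1.1.2 x.2.2.2.1 htw).trans x.2.1.1
    · intro a b
      dsimp only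
      have h1 := fwdT_ch (u := u) (w := w) x.1.1 x.1.2 x.2.2.2.2 x.2.2.2.1 huw htw a b
      simp only [x.2.2.1] at h1
      have h2 := hrel a b
      have h3 := x.2.1.2 a b
      rw [h3] at h1
      generalize (if a = s ∧ b = u then 1 else 0) = k1 at h1 h2
      generalize (if a = s ∧ b = w then 1 else 0) = k2 at h1 h2
      omega
  · -- Q of image (forward)
    refine ⟨(mC_fst htw).trans x.2.2.1, ?_, ?_⟩
    · exact mC_ne_mR x.1.1.2 x.2.2.2.2 x.2.2.2.1 huw
    · exact mF_mC trivial x.2.2.2.2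
  · -- P of image (backward)
    constructor
    · exact (mR_fst y.1.1.2 y.2.2.2.1 htw.symm).trans y.2.1.1
    · intro a b
      dsimp only
      have h1 := fwdT_ch (u := w) (w := u) y.1.1 y.1.2 y.2.2.2.2 y.2.2.2.1
        (Ne.symm huw) htw.symm a b
      simp only [y.2.2.1] at h1
      have h2 := hrel a b
      have h3 := y.2.1.2 a b
      rw [h3] at h1
      generalize (if a = s ∧ b = u then 1 else 0) = k1 at h1 h2
      generalize (if a = s ∧ b = w then 1 else 0) = k2 at h1 h2
      omega
  · -- Q of image (backward)
    refine ⟨(mC_fst htw.symm).trans y.2.2.1, ?_, ?_⟩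
    · exact mC_ne_mR y.1.1.2 y.2.2.2.2 y.2.2.2.1 (Ne.symm huw)
    · exact mF_mC trivial y.2.2.2.2
  · -- left inverse
    intro x
    apply Subtype.ext
    apply Prod.ext
    · apply Subtype.ext
      apply Prod.ext
      · exact move_move_r x.1.1.2 x.2.2.2.2 x.2.2.2.1 huw
      · exact move_move_f x.1.1.2 x.2.2.2.2 x.2.2.2.1 huw
    · exact move_move_c x.1.1.2 x.2.2.2.2 x.2.2.2.1 huw
  · -- right inverse
    intro y
    apply Subtype.ext
    apply Prod.ext
    · apply Subtype.ext
      apply Prod.ext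
      · exact move_move_r y.1.1.2 y.2.2.2.2 y.2.2.2.1 (Ne.symm huw)
      · exact move_move_f y.1.1.2 y.2.2.2.2 y.2.2.2.1 (Ne.symm huw)
    · exact move_move_c y.1.1.2 y.2.2.2.2 y.2.2.2.1 (Ne.symm huw)

end OneStep
end Aux


namespace Aux
variable {d : ℕ} {n : Fin d → ℕ}

lemma sigma_ne_of_fst {t t' : Fin d} {i : Fin (n t')} {j : Fin (n t)} (h : t' ≠ t) :
    (⟨t', i⟩ : Vtx d n) ≠ ⟨t, j⟩ := fun hh => h (congrArg Sigma.fst hh)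

lemma sigma_snd_inj {t : Fin d} {i j : Fin (n t)} (h : (⟨t, i⟩ : Vtx d n) = ⟨t, j⟩) :
    i = j := by
  have := (Sigma.mk.inj_iff.mp h).2
  exact eq_of_heq this

/-- measure: total mass on labels other than `0` -/
noncomputable def MM (γ : Fin d → Vtx d n → ℕ) : ℕ :=
  ∑ s : Fin d, ∑ v : Vtx d n, (if (v.2 : ℕ) = 0 then 0 else γ s v)

lemma tel_base (hn : ∀ t, 0 < n t) (ρ : Fin d) (γstar γ : Fin d → Vtx d n → ℕ)
    (h0 : ∀ (s t : Fin d) (i : Fin (n t)), (i : ℕ) ≠ 0 → γstar s ⟨t, i⟩ = 0)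
    (hsum : ∀ s t, γstar s ⟨t, ⟨0, hn t⟩⟩ = ∑ i : Fin (n t), γ s ⟨t, i⟩)
    (hz : ∀ (s : Fin d) (v : Vtx d n), (v.2 : ℕ) ≠ 0 → γ s v = 0) :
    (Nat.card {T : MTree d n // T.root.1 = ρ ∧ ∀ a b, MTree.ch T a b = γ a b} : ℚ)
      = (Nat.card {T : MTree d n //
            T.root.1 = ρ ∧ ∀ a b, MTree.ch T a b = γstar a b} : ℚ) *
        ∏ s : Fin d, ∏ t : Fin d,
          (Nat.factorial (γstar s ⟨t, ⟨0, hn t⟩⟩) : ℚ) /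
            ∏ i : Fin (n t), (Nat.factorial (γ s ⟨t, i⟩) : ℚ) := by
  have hgeq : γ = γstar := by
    funext s v
    obtain ⟨t, i⟩ := v
    by_cases hi : (i : ℕ) = 0
    · have hieq : i = ⟨0, hn t⟩ := Fin.ext (by simpa using hi)
      rw [hieq, hsum s t]
      symm
      refine Finset.sum_eq_single (⟨0, hn t⟩ : Fin (n t)) ?_ ?_
      · intro j _ hj
        exact hz s ⟨t, j⟩ (fun hh => hj (Fin.ext (by simpa using hh)))
      · intro h; exact absurd (Finset.mem_univ _) h
    · rw [hz s ⟨t, i⟩ hi, h0 s t i hi]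
  rw [hgeq]
  have hprod : (∏ s : Fin d, ∏ t : Fin d,
      (Nat.factorial (γstar s ⟨t, ⟨0, hn t⟩⟩) : ℚ) /
        ∏ i : Fin (n t), (Nat.factorial (γstar s ⟨t, i⟩) : ℚ)) = 1 := by
    refine Finset.prod_eq_one (fun s _ => Finset.prod_eq_one (fun t _ => ?_))
    have hin : (∏ i : Fin (n t), (Nat.factorial (γstar s ⟨t, i⟩) : ℚ))
        = (Nat.factorial (γstar s ⟨t, ⟨0, hn t⟩⟩) : ℚ) := by
      refine Finset.prod_eq_single (⟨0, hn t⟩ : Fin (n t)) ?_ ?_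
      · intro j _ hj
        rw [h0 s t j (fun hh => hj (Fin.ext (by simpa using hh)))]
        simp
      · intro h; exact absurd (Finset.mem_univ _) h
    rw [hin]
    exact div_self (Nat.cast_ne_zero.mpr (Nat.factorial_ne_zero _))
  rw [hprod, mul_one]

lemma telescope (hn : ∀ t, 0 < n t) (ρ : Fin d) (γstar : Fin d → Vtx d n → ℕ)
    (h0 : ∀ (s t : Fin d) (i : Fin (n t)), (i : ℕ) ≠ 0 → γstar s ⟨t, i⟩ = 0) :
    ∀ (m : ℕ) (γ : Fin d → Vtx d n → ℕ),
      (∀ s t, γstar s ⟨t, ⟨0, hn t⟩⟩ = ∑ i : Fin (n t), γ s ⟨t, i⟩) → MM γ ≤ m →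
      (Nat.card {T : MTree d n // T.root.1 = ρ ∧ ∀ a b, MTree.ch T a b = γ a b} : ℚ)
        = (Nat.card {T : MTree d n //
              T.root.1 = ρ ∧ ∀ a b, MTree.ch T a b = γstar a b} : ℚ) *
          ∏ s : Fin d, ∏ t : Fin d,
            (Nat.factorial (γstar s ⟨t, ⟨0, hn t⟩⟩) : ℚ) /
              ∏ i : Fin (n t), (Nat.factorial (γ s ⟨t, i⟩) : ℚ) := by
  intro m
  induction m with
  | zero =>
    intro γ hsum hm
    have hz : ∀ (s : Fin d) (v : Vtx d n), (v.2 : ℕ) ≠ 0 → γ s v = 0 := by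
      intro s v hv
      have h1 : MM γ = 0 := Nat.le_zero.mp hm
      unfold MM at h1
      have h2 := (Finset.sum_eq_zero_iff.mp h1) s (Finset.mem_univ s)
      have h3 := (Finset.sum_eq_zero_iff.mp h2) v (Finset.mem_univ v)
      rwa [if_neg hv] at h3
    exact tel_base hn ρ γstar γ h0 hsum hz
  | succ m IH =>
    intro γ hsum hm
    by_cases hz : ∀ (s : Fin d) (v : Vtx d n), (v.2 : ℕ) ≠ 0 → γ s v = 0
    · exact tel_base hn ρ γstar γ h0 hsum hz
    · push_neg at hz
      obtain ⟨s, v, hv2, hvp⟩ := hz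
      obtain ⟨t, i⟩ := v
      simp only at hv2 hvp
      set u : Vtx d n := ⟨t, i⟩ with hu
      set w : Vtx d n := ⟨t, ⟨0, hn t⟩⟩ with hw
      have hne0 : (⟨0, hn t⟩ : Fin (n t)) ≠ i := by
        intro h; exact hv2 (by rw [← h])
      have huw : u ≠ w := by
        intro h
        exact hne0 (sigma_snd_inj h.symm)
      have htw : u.1 = w.1 := rfl
      have hpos : 1 ≤ γ s u := Nat.one_le_iff_ne_zero.mpr hvp
      set γ'' : Fin d → Vtx d n → ℕ := fun a b =>
        if a = s ∧ b = u then γ a b - 1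
        else if a = s ∧ b = w then γ a b + 1 else γ a b with hγ''
      have hval_u : γ'' s u = γ s u - 1 := by
        simp [hγ'']
      have hval_w : γ'' s w = γ s w + 1 := by
        have h1 : w ≠ u := Ne.symm huw
        simp [hγ'', h1]
      have hval_other : ∀ a b, ¬(a = s ∧ b = u) → ¬(a = s ∧ b = w) → γ'' a b = γ a b := by
        intro a b h1 h2
        rw [hγ'']; simp only [if_neg h1, if_neg h2]
      have hrel : ∀ a b, γ'' a b + (if a = s ∧ b = u then 1 else 0)
          = γ a b + (if a = s ∧ b = w then 1 else 0) := by
        intro a b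
        by_cases h1 : a = s ∧ b = u
        · have h2 : ¬(a = s ∧ b = w) := fun h => huw (h1.2.symm.trans h.2)
          rw [if_pos h1, if_neg h2, h1.1, h1.2, hval_u]
          omega
        · by_cases h2 : a = s ∧ b = w
          · rw [if_neg h1, if_pos h2, h2.1, h2.2, hval_w, Nat.add_zero]
          · rw [if_neg h1, if_neg h2, hval_other a b h1 h2]
      -- sums preserved
      have hsum'' : ∀ s' t', γstar s' ⟨t', ⟨0, hn t'⟩⟩ = ∑ j : Fin (n t'), γ'' s' ⟨t', j⟩ := by
        intro s' t'
        rw [hsum s' t']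
        by_cases hs' : s' = s
        · by_cases ht' : t' = t
          · rw [hs', ht']
            have hmem0 : (⟨0, hn t⟩ : Fin (n t)) ∈ Finset.univ.erase i :=
              Finset.mem_erase.mpr ⟨hne0, Finset.mem_univ _⟩
            have key : ∀ g : Fin (n t) → ℕ, (∑ j : Fin (n t), g j)
                = g i + (g ⟨0, hn t⟩ + ∑ j ∈ (Finset.univ.erase i).erase ⟨0, hn t⟩, g j) := by
              intro g
              rw [Finset.add_sum_erase _ g hmem0, Finset.add_sum_erase _ g (Finset.mem_univ i)]
            rw [key (fun j => γ s ⟨t, j⟩), key (fun j => γ'' s ⟨t, j⟩)]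
            have hrest : ∑ j ∈ (Finset.univ.erase i).erase ⟨0, hn t⟩, γ'' s ⟨t, j⟩
                = ∑ j ∈ (Finset.univ.erase i).erase ⟨0, hn t⟩, γ s ⟨t, j⟩ := by
              refine Finset.sum_congr rfl (fun j hj => ?_)
              have hj0 := (Finset.mem_erase.mp hj).1
              have hji := (Finset.mem_erase.mp (Finset.mem_erase.mp hj).2).1
              refine hval_other s ⟨t, j⟩ ?_ ?_
              · exact fun h => hji (sigma_snd_inj h.2)
              · exact fun h => hj0 (sigma_snd_inj h.2)
            rw [hrest, hval_u, hval_w]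
            have e3 : (γ s ⟨t, i⟩) = γ s u := rfl
            have e4 : (γ s ⟨t, (⟨0, hn t⟩ : Fin (n t))⟩) = γ s w := rfl
            rw [e3, e4]
            omega
          · rw [hs']
            refine Finset.sum_congr rfl (fun j _ => ?_)
            symm
            refine hval_other s ⟨t', j⟩ ?_ ?_
            · exact fun h => (sigma_ne_of_fst (n := n) ht') h.2
            · exact fun h => (sigma_ne_of_fst (n := n) ht') h.2
        · refine Finset.sum_congr rfl (fun j _ => ?_)
          symm
          exact hval_other s' ⟨t', j⟩ (fun h => hs' h.1) (fun h => hs' h.1)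
      -- measure decreases
      have hMM : MM γ'' ≤ m := by
        have hGdef : ∀ δ : Fin d → Vtx d n → ℕ, MM δ
            = (∑ v : Vtx d n, if (v.2 : ℕ) = 0 then 0 else δ s v)
              + ∑ s' ∈ Finset.univ.erase s,
                ∑ v : Vtx d n, (if (v.2 : ℕ) = 0 then 0 else δ s' v) := by
          intro δ
          unfold MM
          exact (Finset.add_sum_erase _
            (fun s' => ∑ v : Vtx d n, (if (v.2 : ℕ) = 0 then 0 else δ s' v))
            (Finset.mem_univ s)).symm
        have hVdef : ∀ δ : Fin d → Vtx d n → ℕ,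
            (∑ v : Vtx d n, if (v.2 : ℕ) = 0 then 0 else δ s v)
            = (if ((u : Vtx d n).2 : ℕ) = 0 then 0 else δ s u)
              + ∑ v ∈ Finset.univ.erase u, (if (v.2 : ℕ) = 0 then 0 else δ s v) :=
          fun δ => (Finset.add_sum_erase _
            (fun v => (if (v.2 : ℕ) = 0 then 0 else δ s v)) (Finset.mem_univ u)).symm
        have houter : ∑ s' ∈ Finset.univ.erase s,
            (∑ v : Vtx d n, if (v.2 : ℕ) = 0 then 0 else γ'' s' v)
            = ∑ s' ∈ Finset.univ.erase s,
            (∑ v : Vtx d n, if (v.2 : ℕ) = 0 then 0 else γ s' v) := by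
          refine Finset.sum_congr rfl (fun s' hs' => Finset.sum_congr rfl (fun v _ => ?_))
          have hs'ne := (Finset.mem_erase.mp hs').1
          rw [hval_other s' v (fun h => hs'ne h.1) (fun h => hs'ne h.1)]
        have hrest : ∑ v ∈ Finset.univ.erase u,
            (if (v.2 : ℕ) = 0 then 0 else γ'' s v)
            = ∑ v ∈ Finset.univ.erase u, (if (v.2 : ℕ) = 0 then 0 else γ s v) := by
          refine Finset.sum_congr rfl (fun v hv => ?_)
          by_cases hv0 : (v.2 : ℕ) = 0
          · rw [if_pos hv0, if_pos hv0]
          · rw [if_neg hv0, if_neg hv0]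
            have hvu := (Finset.mem_erase.mp hv).1
            refine hval_other s v (fun h => hvu h.2) (fun h => ?_)
            rw [h.2, hw] at hv0
            exact hv0 rfl
        have hifu'' : (if ((u : Vtx d n).2 : ℕ) = 0 then 0 else γ'' s u) = γ s u - 1 := by
          rw [if_neg (by exact hv2), hval_u]
        have hifu : (if ((u : Vtx d n).2 : ℕ) = 0 then 0 else γ s u) = γ s u := by
          rw [if_neg (by exact hv2)]
        have E1 : MM γ'' + 1 = MM γ := by
          rw [hGdef γ'', hGdef γ, hVdef γ'', hVdef γ, houter, hrest, hifu'', hifu]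
          omega
        omega
      -- one-step identity
      have key := onestep (n := n) ρ s u w huw htw γ γ'' hrel
      rw [hval_w] at key
      have keyQ : (Nat.card {T : MTree d n //
            T.root.1 = ρ ∧ ∀ a b, MTree.ch T a b = γ a b} : ℚ) * (γ s u : ℚ)
          = (Nat.card {T : MTree d n //
            T.root.1 = ρ ∧ ∀ a b, MTree.ch T a b = γ'' a b} : ℚ) * ((γ s w : ℚ) + 1) := by
        exact_mod_cast key
      have IH' := IH γ'' hsum'' hMM
      -- product relation
      have hPP : (∏ s' : Fin d, ∏ t' : Fin d,
            (Nat.factorial (γstar s' ⟨t', ⟨0, hn t'⟩⟩) : ℚ) /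
              ∏ j : Fin (n t'), (Nat.factorial (γ s' ⟨t', j⟩) : ℚ)) * (γ s u : ℚ)
          = (∏ s' : Fin d, ∏ t' : Fin d,
            (Nat.factorial (γstar s' ⟨t', ⟨0, hn t'⟩⟩) : ℚ) /
              ∏ j : Fin (n t'), (Nat.factorial (γ'' s' ⟨t', j⟩) : ℚ)) * ((γ s w : ℚ) + 1) := by
        have hDD : (γ s u : ℚ) * (∏ j : Fin (n t), (Nat.factorial (γ'' s ⟨t, j⟩) : ℚ))
            = ((γ s w : ℚ) + 1) * (∏ j : Fin (n t), (Nat.factorial (γ s ⟨t, j⟩) : ℚ)) := by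
          have hmem0 : (⟨0, hn t⟩ : Fin (n t)) ∈ Finset.univ.erase i :=
            Finset.mem_erase.mpr ⟨hne0, Finset.mem_univ _⟩
          have d1 : (∏ j : Fin (n t), (Nat.factorial (γ s ⟨t, j⟩) : ℚ))
              = (Nat.factorial (γ s ⟨t, i⟩) : ℚ) * ((Nat.factorial (γ s ⟨t, ⟨0, hn t⟩⟩) : ℚ)
                * ∏ j ∈ (Finset.univ.erase i).erase ⟨0, hn t⟩,
                    (Nat.factorial (γ s ⟨t, j⟩) : ℚ)) := by
            rw [Finset.mul_prod_erase _
              (fun j => (Nat.factorial (γ s ⟨t, j⟩) : ℚ)) hmem0,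
              Finset.mul_prod_erase _
              (fun j => (Nat.factorial (γ s ⟨t, j⟩) : ℚ)) (Finset.mem_univ i)]
          have d2 : (∏ j : Fin (n t), (Nat.factorial (γ'' s ⟨t, j⟩) : ℚ))
              = (Nat.factorial (γ'' s ⟨t, i⟩) : ℚ) * ((Nat.factorial (γ'' s ⟨t, ⟨0, hn t⟩⟩) : ℚ)
                * ∏ j ∈ (Finset.univ.erase i).erase ⟨0, hn t⟩,
                    (Nat.factorial (γ'' s ⟨t, j⟩) : ℚ)) := by
            rw [Finset.mul_prod_erase _
              (fun j => (Nat.factorial (γ'' s ⟨t, j⟩) : ℚ)) hmem0,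
              Finset.mul_prod_erase _
              (fun j => (Nat.factorial (γ'' s ⟨t, j⟩) : ℚ)) (Finset.mem_univ i)]
          have hrest : ∏ j ∈ (Finset.univ.erase i).erase ⟨0, hn t⟩,
              (Nat.factorial (γ'' s ⟨t, j⟩) : ℚ)
              = ∏ j ∈ (Finset.univ.erase i).erase ⟨0, hn t⟩,
              (Nat.factorial (γ s ⟨t, j⟩) : ℚ) := by
            refine Finset.prod_congr rfl (fun j hj => ?_)
            have hj0 := (Finset.mem_erase.mp hj).1
            have hji := (Finset.mem_erase.mp (Finset.mem_erase.mp hj).2).1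
            rw [hval_other s ⟨t, j⟩ (fun h => hji (sigma_snd_inj h.2))
              (fun h => hj0 (sigma_snd_inj h.2))]
          have e1 : (γ'' s ⟨t, i⟩) = γ s u - 1 := hval_u
          have e2 : (γ'' s ⟨t, (⟨0, hn t⟩ : Fin (n t))⟩) = γ s w + 1 := hval_w
          rw [d1, d2, hrest, e1, e2]
          have c1 : (γ s u : ℚ) * (Nat.factorial (γ s u - 1) : ℚ)
              = (Nat.factorial (γ s u) : ℚ) := by
            exact_mod_cast congrArg (Nat.cast (R := ℚ)) (Nat.mul_factorial_pred (Nat.one_le_iff_ne_zero.mp hpos))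
          have c2 : (Nat.factorial (γ s w + 1) : ℚ)
              = ((γ s w : ℚ) + 1) * (Nat.factorial (γ s w) : ℚ) := by
            exact_mod_cast congrArg (Nat.cast (R := ℚ)) (Nat.factorial_succ (γ s w))
          have e3 : (γ s ⟨t, i⟩) = γ s u := rfl
          have e4 : (γ s ⟨t, (⟨0, hn t⟩ : Fin (n t))⟩) = γ s w := rfl
          rw [e3, e4, c2, ← c1]
          ring
        -- now lift to the double product
        have hout : ∀ s' ∈ Finset.univ.erase s,
            (∏ t' : Fin d, (Nat.factorial (γstar s' ⟨t', ⟨0, hn t'⟩⟩) : ℚ) /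
              ∏ j : Fin (n t'), (Nat.factorial (γ'' s' ⟨t', j⟩) : ℚ))
            = ∏ t' : Fin d, (Nat.factorial (γstar s' ⟨t', ⟨0, hn t'⟩⟩) : ℚ) /
              ∏ j : Fin (n t'), (Nat.factorial (γ s' ⟨t', j⟩) : ℚ) := by
          intro s' hs'
          have hs'ne := (Finset.mem_erase.mp hs').1
          refine Finset.prod_congr rfl (fun t' _ => ?_)
          congr 1
          refine Finset.prod_congr rfl (fun j _ => ?_)
          rw [hval_other s' ⟨t', j⟩ (fun h => hs'ne h.1) (fun h => hs'ne h.1)]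
        have hint : ∀ t' ∈ Finset.univ.erase t,
            ((Nat.factorial (γstar s ⟨t', ⟨0, hn t'⟩⟩) : ℚ) /
              ∏ j : Fin (n t'), (Nat.factorial (γ'' s ⟨t', j⟩) : ℚ))
            = (Nat.factorial (γstar s ⟨t', ⟨0, hn t'⟩⟩) : ℚ) /
              ∏ j : Fin (n t'), (Nat.factorial (γ s ⟨t', j⟩) : ℚ) := by
          intro t' ht'
          have ht'ne := (Finset.mem_erase.mp ht').1
          congr 1
          refine Finset.prod_congr rfl (fun j _ => ?_)
          rw [hval_other s ⟨t', j⟩ (fun h => (sigma_ne_of_fst (n := n) ht'ne) h.2)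
            (fun h => (sigma_ne_of_fst (n := n) ht'ne) h.2)]
        rw [← Finset.mul_prod_erase Finset.univ
            (fun s' => ∏ t' : Fin d, (Nat.factorial (γstar s' ⟨t', ⟨0, hn t'⟩⟩) : ℚ) /
              ∏ j : Fin (n t'), (Nat.factorial (γ s' ⟨t', j⟩) : ℚ)) (Finset.mem_univ s),
          ← Finset.mul_prod_erase Finset.univ
            (fun s' => ∏ t' : Fin d, (Nat.factorial (γstar s' ⟨t', ⟨0, hn t'⟩⟩) : ℚ) /
              ∏ j : Fin (n t'), (Nat.factorial (γ'' s' ⟨t', j⟩) : ℚ)) (Finset.mem_univ s),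
          Finset.prod_congr rfl hout]
        rw [← Finset.mul_prod_erase Finset.univ
            (fun t' => (Nat.factorial (γstar s ⟨t', ⟨0, hn t'⟩⟩) : ℚ) /
              ∏ j : Fin (n t'), (Nat.factorial (γ s ⟨t', j⟩) : ℚ)) (Finset.mem_univ t),
          ← Finset.mul_prod_erase Finset.univ
            (fun t' => (Nat.factorial (γstar s ⟨t', ⟨0, hn t'⟩⟩) : ℚ) /
              ∏ j : Fin (n t'), (Nat.factorial (γ'' s ⟨t', j⟩) : ℚ)) (Finset.mem_univ t),
          Finset.prod_congr rfl hint]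
        -- now pure algebra with hDD
        have hD : (∏ j : Fin (n t), (Nat.factorial (γ s ⟨t, j⟩) : ℚ)) ≠ 0 :=
          Finset.prod_ne_zero_iff.mpr
            (fun j _ => Nat.cast_ne_zero.mpr (Nat.factorial_ne_zero _))
        have hD'' : (∏ j : Fin (n t), (Nat.factorial (γ'' s ⟨t, j⟩) : ℚ)) ≠ 0 :=
          Finset.prod_ne_zero_iff.mpr
            (fun j _ => Nat.cast_ne_zero.mpr (Nat.factorial_ne_zero _))
        have hfac : ((Nat.factorial (γstar s ⟨t, ⟨0, hn t⟩⟩) : ℚ) /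
              (∏ j : Fin (n t), (Nat.factorial (γ s ⟨t, j⟩) : ℚ))) * (γ s u : ℚ)
            = ((Nat.factorial (γstar s ⟨t, ⟨0, hn t⟩⟩) : ℚ) /
              (∏ j : Fin (n t), (Nat.factorial (γ'' s ⟨t, j⟩) : ℚ))) * ((γ s w : ℚ) + 1) := by
          rw [div_mul_eq_mul_div, div_mul_eq_mul_div, div_eq_div_iff hD hD'']
          linear_combination (Nat.factorial (γstar s ⟨t, ⟨0, hn t⟩⟩) : ℚ) * hDD
        set P1 := ∏ t' ∈ Finset.univ.erase t,
          (Nat.factorial (γstar s ⟨t', ⟨0, hn t'⟩⟩) : ℚ) /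
            ∏ j : Fin (n t'), (Nat.factorial (γ s ⟨t', j⟩) : ℚ) with hP1
        set P2 := ∏ s' ∈ Finset.univ.erase s,
          (∏ t' : Fin d, (Nat.factorial (γstar s' ⟨t', ⟨0, hn t'⟩⟩) : ℚ) /
            ∏ j : Fin (n t'), (Nat.factorial (γ s' ⟨t', j⟩) : ℚ)) with hP2
        linear_combination P1 * P2 * hfac
      -- conclude
      have hγsu : (γ s u : ℚ) ≠ 0 := Nat.cast_ne_zero.mpr (by omega)
      apply mul_right_cancel₀ hγsu
      calc (Nat.card {T : MTree d n //
            T.root.1 = ρ ∧ ∀ a b, MTree.ch T a b = γ a b} : ℚ) * (γ s u : ℚ)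
          = (Nat.card {T : MTree d n //
            T.root.1 = ρ ∧ ∀ a b, MTree.ch T a b = γ'' a b} : ℚ) * ((γ s w : ℚ) + 1) := keyQ
        _ = ((Nat.card {T : MTree d n //
            T.root.1 = ρ ∧ ∀ a b, MTree.ch T a b = γstar a b} : ℚ) *
            ∏ s' : Fin d, ∏ t' : Fin d,
              (Nat.factorial (γstar s' ⟨t', ⟨0, hn t'⟩⟩) : ℚ) /
                ∏ j : Fin (n t'), (Nat.factorial (γ'' s' ⟨t', j⟩) : ℚ)) * ((γ s w : ℚ) + 1) := by
            rw [IH']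
        _ = (Nat.card {T : MTree d n //
            T.root.1 = ρ ∧ ∀ a b, MTree.ch T a b = γstar a b} : ℚ) *
            ((∏ s' : Fin d, ∏ t' : Fin d,
              (Nat.factorial (γstar s' ⟨t', ⟨0, hn t'⟩⟩) : ℚ) /
                ∏ j : Fin (n t'), (Nat.factorial (γ'' s' ⟨t', j⟩) : ℚ)) * ((γ s w : ℚ) + 1)) := by
            ring
        _ = (Nat.card {T : MTree d n //
            T.root.1 = ρ ∧ ∀ a b, MTree.ch T a b = γstar a b} : ℚ) *
            ((∏ s' : Fin d, ∏ t' : Fin d,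
              (Nat.factorial (γstar s' ⟨t', ⟨0, hn t'⟩⟩) : ℚ) /
                ∏ j : Fin (n t'), (Nat.factorial (γ s' ⟨t', j⟩) : ℚ)) * (γ s u : ℚ)) := by
            rw [← hPP]
        _ = ((Nat.card {T : MTree d n //
            T.root.1 = ρ ∧ ∀ a b, MTree.ch T a b = γstar a b} : ℚ) *
            ∏ s' : Fin d, ∏ t' : Fin d,
              (Nat.factorial (γstar s' ⟨t', ⟨0, hn t'⟩⟩) : ℚ) /
                ∏ j : Fin (n t'), (Nat.factorial (γ s' ⟨t', j⟩) : ℚ)) * (γ s u : ℚ) := by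
            ring

end Aux


/-- **Reduction to star trees (Lemma 6).**
If `γ*` is obtained from the indegree vector `γ` by transferring, for all `s,t`, all
the indegrees `γ_{s,t,i}` onto the vertex of type `t` with label `1`, then
`|T_{ρ,γ}| = |T_{ρ,γ*}| · ∏_{s,t} γ*_{s,t,1}! / (γ_{s,t,1}! ⋯ γ_{s,t,n_t}!)`. -/
theorem multitype_cayley_reduction_to_star (d : ℕ) (n : Fin d → ℕ)
    (hn : ∀ t, 0 < n t) (ρ : Fin d) (γ : Fin d → Vtx d n → ℕ)
    (γstar : Fin d → Vtx d n → ℕ)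
    (hγstar1 : ∀ s t, γstar s ⟨t, ⟨0, hn t⟩⟩ = ∑ i : Fin (n t), γ s ⟨t, i⟩)
    (hγstar0 : ∀ (s t : Fin d) (i : Fin (n t)), (i : ℕ) ≠ 0 → γstar s ⟨t, i⟩ = 0) :
    (Nat.card {T : MTree d n // T.root.1 = ρ ∧ ∀ a b, T.ch a b = γ a b} : ℚ)
      =
    (Nat.card {T : MTree d n // T.root.1 = ρ ∧ ∀ a b, T.ch a b = γstar a b} : ℚ) *
      ∏ s : Fin d, ∏ t : Fin d,
        (Nat.factorial (γstar s ⟨t, ⟨0, hn t⟩⟩) : ℚ) /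
          ∏ i : Fin (n t), (Nat.factorial (γ s ⟨t, i⟩) : ℚ) := by
  exact Aux.telescope hn ρ γstar hγstar0 (Aux.MM γ) γ hγstar1 (le_refl _)
end

section
/- Fix d ≥ 1, a tuple n = (n_1,…,n_d) of positive integers, and ρ ∈ [d]. In the polynomial ring ℤ[y_{s,t} : s,t ∈ [d]] the following identity holds: Σ_{T star tree in T_ρ(n)} ∏_{s,t∈[d]} y_{s,t}^{ch_s(t,1)} = ∏_{s∈[d]} ( Σ_{t∈[d]} y_{s,t} )^{n_s − 1} · Σ_{A ∈ Cay_d^ρ} ∏_{(s,t)∈A} y_{s,t}. -/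
open scoped Classical

section StarProof

open Finset MvPolynomial

variable {d : ℕ} {n : Fin d → ℕ} {ρ : Fin d}

/-- congruence for the distinguished label-0 vertices -/
lemma sigma0_congr (hn : ∀ t, 0 < n t) {a b : Fin d} (h : a = b) :
    (⟨a, ⟨0, hn a⟩⟩ : Vtx d n) = ⟨b, ⟨0, hn b⟩⟩ := by subst h; rfl

lemma label_of_eq {v w : Vtx d n} (h : v = w) : (v.2 : ℕ) = (w.2 : ℕ) := by subst h; rfl

lemma vtx_eq_of_label_zero (hn : ∀ t, 0 < n t) (w : Vtx d n) (h : (w.2 : ℕ) = 0) :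
    w = ⟨w.1, ⟨0, hn w.1⟩⟩ :=
  Sigma.ext rfl (heq_of_eq (Fin.ext h))

/-- vertices of fixed type `s` satisfying a predicate are the labels satisfying it -/
def sigmaFixedEquiv (s : Fin d) (P : Vtx d n → Prop) :
    {v : Vtx d n // v.1 = s ∧ P v} ≃ {i : Fin (n s) // P ⟨s, i⟩} where
  toFun := fun ⟨⟨t, i⟩, h1, h2⟩ => ⟨h1 ▸ i, by subst h1; exact h2⟩
  invFun := fun ⟨i, h⟩ => ⟨⟨s, i⟩, rfl, h⟩
  left_inv := fun ⟨⟨t, i⟩, h1, h2⟩ => by subst h1; rfl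
  right_inv := fun ⟨i, h⟩ => rfl

lemma ch_eq_card (T : MTree d n) (s : Fin d) (w : Vtx d n) :
    T.ch s w = (univ.filter fun i : Fin (n s) =>
      (⟨s, i⟩ : Vtx d n) ≠ T.root ∧ T.parent ⟨s, i⟩ = w).card := by
  rw [MTree.ch, Nat.card_congr (sigmaFixedEquiv s fun v => v ≠ T.root ∧ T.parent v = w),
    Nat.card_eq_fintype_card, Fintype.card_subtype]

section StarTree

variable (T : MTree d n)

lemma parent_root : T.parent T.root = T.root := T.2.1

variable (hstar : ∀ (s t : Fin d) (i : Fin (n t)), (i : ℕ) ≠ 0 → T.ch s ⟨t, i⟩ = 0)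

include hstar in
lemma child_label_zero (v : Vtx d n) (hv : v ≠ T.root) : ((T.parent v).2 : ℕ) = 0 := by
  by_contra h
  have h0 : T.ch v.1 (T.parent v) = 0 := hstar v.1 (T.parent v).1 (T.parent v).2 h
  rw [MTree.ch] at h0
  have : Nonempty {u : Vtx d n // u.1 = v.1 ∧ u ≠ T.root ∧ T.parent u = T.parent v} :=
    ⟨⟨v, rfl, hv, rfl⟩⟩
  have hpos :=
    Nat.card_pos (α := {u : Vtx d n // u.1 = v.1 ∧ u ≠ T.root ∧ T.parent u = T.parent v})
  omega

lemma exists_child_aux : ∀ (k : ℕ) (w : Vtx d n), T.parent^[k] w = T.root → w ≠ T.root →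
    ∃ v, v ≠ T.root ∧ T.parent v = T.root := by
  intro k
  induction k with
  | zero => intro w h hw; exact absurd h hw
  | succ k ih =>
    intro w h hw
    by_cases hpw : T.parent w = T.root
    · exact ⟨w, hw, hpw⟩
    · exact ih (T.parent w) (by rwa [Function.iterate_succ_apply] at h) hpw

variable (hn : ∀ t, 0 < n t) (hroot : T.root.1 = ρ)

include hstar hroot in
lemma root_eq : T.root = ⟨ρ, ⟨0, hn ρ⟩⟩ := by
  have h0 : (T.root.2 : ℕ) = 0 := by
    by_contra h
    have hw : (⟨ρ, ⟨0, hn ρ⟩⟩ : Vtx d n) ≠ T.root := fun he => h (label_of_eq he).symm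
    obtain ⟨k, hk⟩ := T.2.2 (⟨ρ, ⟨0, hn ρ⟩⟩ : Vtx d n)
    obtain ⟨v, hv, hpv⟩ := exists_child_aux T k _ hk hw
    have hz := child_label_zero T hstar v hv
    rw [hpv] at hz
    exact h hz
  calc T.root = ⟨T.root.1, ⟨0, hn _⟩⟩ := vtx_eq_of_label_zero hn _ h0
    _ = ⟨ρ, ⟨0, hn ρ⟩⟩ := sigma0_congr hn hroot

include hstar hroot in
lemma parent_zero (v : Vtx d n) : T.parent v = ⟨(T.parent v).1, ⟨0, hn _⟩⟩ := by
  by_cases hv : v = T.root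
  · rw [hv, parent_root]
    exact vtx_eq_of_label_zero hn _ (label_of_eq (root_eq T hstar hn hroot))
  · exact vtx_eq_of_label_zero hn _ (child_label_zero T hstar v hv)

include hstar hroot in
lemma prod_ch_eq (s : Fin d) :
    ∏ t : Fin d, (MvPolynomial.X (s, t) : MvPolynomial (Fin d × Fin d) ℤ) ^
        T.ch s ⟨t, ⟨0, hn t⟩⟩
      = ∏ i : Fin (n s), if (⟨s, i⟩ : Vtx d n) = T.root then 1
          else MvPolynomial.X (s, (T.parent ⟨s, i⟩).1) := by
  have key : ∀ t : Fin d, T.ch s ⟨t, ⟨0, hn t⟩⟩ =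
      ((univ.filter fun i : Fin (n s) => (⟨s, i⟩ : Vtx d n) ≠ T.root).filter
        fun i => (T.parent ⟨s, i⟩).1 = t).card := by
    intro t
    rw [ch_eq_card, Finset.filter_filter]
    congr 1
    apply Finset.filter_congr
    intro i _
    constructor
    · rintro ⟨h1, h2⟩
      exact ⟨h1, congrArg Sigma.fst h2⟩
    · rintro ⟨h1, h2⟩
      exact ⟨h1, (parent_zero T hstar hn hroot _).trans (sigma0_congr hn h2)⟩
  calc ∏ t : Fin d, (MvPolynomial.X (s, t) : MvPolynomial (Fin d × Fin d) ℤ) ^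
        T.ch s ⟨t, ⟨0, hn t⟩⟩
      = ∏ t : Fin d, ∏ i ∈ (univ.filter fun i : Fin (n s) =>
          (⟨s, i⟩ : Vtx d n) ≠ T.root) with (T.parent ⟨s, i⟩).1 = t,
            MvPolynomial.X (s, (T.parent ⟨s, i⟩).1) := by
        refine Finset.prod_congr rfl fun t _ => ?_
        rw [key t, ← Finset.prod_const]
        refine Finset.prod_congr rfl fun i hi => ?_
        rw [(Finset.mem_filter.1 hi).2]
    _ = ∏ i ∈ univ.filter fun i : Fin (n s) => (⟨s, i⟩ : Vtx d n) ≠ T.root,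
          MvPolynomial.X (s, (T.parent ⟨s, i⟩).1) :=
        Finset.prod_fiberwise _ _ _
    _ = _ := by
        rw [Finset.prod_filter]
        refine Finset.prod_congr rfl fun i _ => ?_
        by_cases h : (⟨s, i⟩ : Vtx d n) = T.root <;> simp [h]

end StarTree

section Mk

variable (hn : ∀ t, 0 < n t)

/-- parent function of the star tree built from `A` and `f` -/
def mkparent (A : Fin d → Fin d) (f : ∀ s, Fin (n s - 1) → Fin d) :
    Vtx d n → Vtx d n := fun v =>
  if h : (v.2 : ℕ) = 0 then ⟨A v.1, ⟨0, hn _⟩⟩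
  else ⟨f v.1 ⟨(v.2 : ℕ) - 1, by have := v.2.isLt; omega⟩, ⟨0, hn _⟩⟩

lemma mkparent_zero (A : Fin d → Fin d) (f : ∀ s, Fin (n s - 1) → Fin d) (s : Fin d) :
    mkparent hn A f ⟨s, ⟨0, hn s⟩⟩ = ⟨A s, ⟨0, hn _⟩⟩ := by
  simp [mkparent]

lemma mkparent_succ (A : Fin d → Fin d) (f : ∀ s, Fin (n s - 1) → Fin d) (s : Fin d)
    (i : Fin (n s)) (h : (i : ℕ) ≠ 0) :
    mkparent hn A f ⟨s, i⟩ =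
      ⟨f s ⟨(i : ℕ) - 1, by have := i.isLt; omega⟩, ⟨0, hn _⟩⟩ := by
  simp [mkparent, h]

lemma mkparent_label (A : Fin d → Fin d) (f : ∀ s, Fin (n s - 1) → Fin d) (v : Vtx d n) :
    ∃ g, mkparent hn A f v = ⟨g, ⟨0, hn g⟩⟩ := by
  unfold mkparent
  split <;> exact ⟨_, rfl⟩

lemma mkparent_iter (A : Fin d → Fin d) (f : ∀ s, Fin (n s - 1) → Fin d) (k : ℕ) (s : Fin d) :
    (mkparent hn A f)^[k] ⟨s, ⟨0, hn s⟩⟩ = ⟨A^[k] s, ⟨0, hn _⟩⟩ := by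
  induction k generalizing s with
  | zero => rfl
  | succ k ih =>
    rw [Function.iterate_succ_apply, Function.iterate_succ_apply, mkparent_zero]
    exact ih (A s)

/-- the star tree built from a Cayley tree `A` and parent-type choices `f` -/
def mk (A : Cay d ρ) (f : ∀ s, Fin (n s - 1) → Fin d) : MTree d n :=
  ⟨(⟨ρ, ⟨0, hn ρ⟩⟩, mkparent hn A.1 f), by
    constructor
    · show mkparent hn A.1 f ⟨ρ, ⟨0, hn ρ⟩⟩ = ⟨ρ, ⟨0, hn ρ⟩⟩
      rw [mkparent_zero]
      exact sigma0_congr hn A.2.1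
    · intro v
      obtain ⟨g, hg⟩ := mkparent_label hn A.1 f v
      obtain ⟨k, hk⟩ := A.2.2 g
      refine ⟨k + 1, ?_⟩
      show (mkparent hn A.1 f)^[k + 1] v = ⟨ρ, ⟨0, hn ρ⟩⟩
      rw [Function.iterate_succ_apply, hg, mkparent_iter]
      exact sigma0_congr hn hk⟩

lemma mk_root (A : Cay d ρ) (f : ∀ s, Fin (n s - 1) → Fin d) :
    (mk hn A f).root = ⟨ρ, ⟨0, hn ρ⟩⟩ := rfl

lemma mk_parent (A : Cay d ρ) (f : ∀ s, Fin (n s - 1) → Fin d) :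
    (mk hn A f).parent = mkparent hn A.1 f := rfl

lemma mk_star (A : Cay d ρ) (f : ∀ s, Fin (n s - 1) → Fin d) :
    ∀ (s t : Fin d) (i : Fin (n t)), (i : ℕ) ≠ 0 → (mk hn A f).ch s ⟨t, i⟩ = 0 := by
  intro s t i hi
  rw [ch_eq_card, Finset.card_eq_zero, Finset.filter_eq_empty_iff]
  rintro j - ⟨-, hj⟩
  obtain ⟨g, hg⟩ := mkparent_label hn A.1 f ⟨s, j⟩
  rw [mk_parent, hg] at hj
  exact hi ((label_of_eq hj).symm ▸ rfl)

end Mk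

end StarProof

section StarProof2

open Finset MvPolynomial

variable {d : ℕ} {n : Fin d → ℕ} {ρ : Fin d}

/-- decomposition of star trees -/
noncomputable def starEquiv (hn : ∀ t, 0 < n t) (ρ : Fin d) :
    {T : MTree d n // T.root.1 = ρ ∧
      ∀ (s t : Fin d) (i : Fin (n t)), (i : ℕ) ≠ 0 → T.ch s ⟨t, i⟩ = 0} ≃
      Cay d ρ × (∀ s : Fin d, Fin (n s - 1) → Fin d) where
  toFun T :=
    (⟨fun s => (T.1.parent ⟨s, ⟨0, hn s⟩⟩).1, by
      constructor
      · show (T.1.parent ⟨ρ, ⟨0, hn ρ⟩⟩).1 = ρ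
        have h : (⟨ρ, ⟨0, hn ρ⟩⟩ : Vtx d n) = T.1.root :=
          (root_eq T.1 T.2.2 hn T.2.1).symm
        rw [h, parent_root, T.2.1]
      · intro s
        have key : ∀ (k : ℕ) (s : Fin d),
            T.1.parent^[k] ⟨s, ⟨0, hn s⟩⟩ =
              ⟨(fun s => (T.1.parent ⟨s, ⟨0, hn s⟩⟩).1)^[k] s, ⟨0, hn _⟩⟩ := by
          intro k
          induction k with
          | zero => intro s; rfl
          | succ k ih =>
            intro s
            rw [Function.iterate_succ_apply, Function.iterate_succ_apply,
              parent_zero T.1 T.2.2 hn T.2.1 ⟨s, ⟨0, hn s⟩⟩]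
            exact ih ((T.1.parent ⟨s, ⟨0, hn s⟩⟩).1)
        obtain ⟨k, hk⟩ := T.1.2.2 (⟨s, ⟨0, hn s⟩⟩ : Vtx d n)
        have hk' : T.1.parent^[k] ⟨s, ⟨0, hn s⟩⟩ = T.1.root := hk
        refine ⟨k, ?_⟩
        have h2 := (key k s).symm.trans hk'
        rw [root_eq T.1 T.2.2 hn T.2.1] at h2
        exact congrArg Sigma.fst h2⟩,
     fun s j => (T.1.parent ⟨s, ⟨(j : ℕ) + 1, by have := j.isLt; omega⟩⟩).1)
  invFun p := ⟨mk hn p.1 p.2, rfl, mk_star hn p.1 p.2⟩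
  left_inv := by
    rintro ⟨T, hroot, hstar⟩
    apply Subtype.ext
    apply Subtype.ext
    apply Prod.ext
    · exact (root_eq T hstar hn hroot).symm
    · funext v
      obtain ⟨s, i⟩ := v
      show mkparent hn _ _ _ = T.parent ⟨s, i⟩
      by_cases h : (i : ℕ) = 0
      · have hi : i = ⟨0, hn s⟩ := Fin.ext h
        rw [hi, mkparent_zero]
        exact (parent_zero T hstar hn hroot _).symm
      · rw [mkparent_succ hn _ _ s i h]
        have e1 : (⟨(i : ℕ) - 1 + 1, by have := i.isLt; omega⟩ : Fin (n s)) = i :=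
          Fin.ext (show (i : ℕ) - 1 + 1 = (i : ℕ) by omega)
        have e2 := congrArg (fun j : Fin (n s) => (T.parent ⟨s, j⟩).1) e1
        exact (sigma0_congr hn e2).trans (parent_zero T hstar hn hroot _).symm
  right_inv := by
    rintro ⟨A, f⟩
    apply Prod.ext
    · apply Subtype.ext
      funext s
      show (mkparent hn A.1 f ⟨s, ⟨0, hn s⟩⟩).1 = A.1 s
      rw [mkparent_zero]
    · funext s j
      show (mkparent hn A.1 f ⟨s, ⟨(j : ℕ) + 1, _⟩⟩).1 = f s j
      rw [mkparent_succ hn A.1 f s _ (by simp)]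
      exact congrArg (f s) (Fin.ext (show (j : ℕ) + 1 - 1 = (j : ℕ) by omega))

lemma mk_prod (hn : ∀ t, 0 < n t) (A : Cay d ρ) (f : ∀ s : Fin d, Fin (n s - 1) → Fin d)
    (s : Fin d) :
    (∏ i : Fin (n s), if (⟨s, i⟩ : Vtx d n) = (mk hn A f).root then 1
        else (MvPolynomial.X (s, ((mk hn A f).parent ⟨s, i⟩).1) :
          MvPolynomial (Fin d × Fin d) ℤ))
      = (if s = ρ then 1 else MvPolynomial.X (s, A.1 s)) *
          ∏ j : Fin (n s - 1), MvPolynomial.X (s, f s j) := by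
  rw [← Finset.mul_prod_erase univ _ (Finset.mem_univ (⟨0, hn s⟩ : Fin (n s)))]
  congr 1
  · by_cases hs : s = ρ
    · subst hs
      rw [if_pos rfl, if_pos]
      exact sigma0_congr hn rfl
    · rw [if_neg (fun h => hs (congrArg Sigma.fst h)), if_neg hs, mk_parent,
        mkparent_zero]
  · refine Finset.prod_bij' (fun i _ => (⟨(i : ℕ) - 1, ?_⟩ : Fin (n s - 1)))
      (fun j _ => (⟨(j : ℕ) + 1, ?_⟩ : Fin (n s))) ?_ ?_ ?_ ?_ ?_
    · rename_i hi
      have hi0 : (i : ℕ) ≠ 0 := fun h => (Finset.mem_erase.1 hi).1 (Fin.ext h)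
      have := i.isLt; omega
    · have := j.isLt; omega
    · intro a ha; exact Finset.mem_univ _
    · intro a ha
      refine Finset.mem_erase.2 ⟨?_, Finset.mem_univ _⟩
      intro h
      exact absurd (congrArg Fin.val h) (by simp)
    · intro a ha
      have ha0 : (a : ℕ) ≠ 0 := fun h => (Finset.mem_erase.1 ha).1 (Fin.ext h)
      exact Fin.ext (show (a : ℕ) - 1 + 1 = (a : ℕ) by omega)
    · intro a ha
      exact Fin.ext (show (a : ℕ) + 1 - 1 = (a : ℕ) by omega)
    · intro a ha
      have ha0 : (a : ℕ) ≠ 0 := fun h => (Finset.mem_erase.1 ha).1 (Fin.ext h)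
      have hne : (⟨s, a⟩ : Vtx d n) ≠ (mk hn A f).root := by
        intro h
        exact ha0 (label_of_eq h)
      rw [if_neg hne, mk_parent, mkparent_succ hn A.1 f s a ha0]

end StarProof2

/-- **Generating function of star trees (Lemma 7).**
A star tree is a multitype Cayley tree in which every vertex with label `≠ 1` is a
leaf. The generating polynomial of star trees of profile `n` with root type `ρ`,
counted according to the indegrees of the vertices labeled `1`, is
`∏_s (Σ_t y_{s,t})^{n_s−1} · Σ_{A ∈ Cay_d^ρ} ∏_{(s,t)∈A} y_{s,t}`. -/
theorem star_tree_generating_function (d : ℕ) (n : Fin d → ℕ)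
    (hn : ∀ t, 0 < n t) (ρ : Fin d) :
    ∑ T : {T : MTree d n // T.root.1 = ρ ∧
            ∀ (s t : Fin d) (i : Fin (n t)), (i : ℕ) ≠ 0 → T.ch s ⟨t, i⟩ = 0},
        ∏ s : Fin d, ∏ t : Fin d,
          (MvPolynomial.X (s, t) : MvPolynomial (Fin d × Fin d) ℤ) ^
            T.1.ch s ⟨t, ⟨0, hn t⟩⟩
      =
    (∏ s : Fin d,
        (∑ t : Fin d,
          (MvPolynomial.X (s, t) : MvPolynomial (Fin d × Fin d) ℤ)) ^ (n s - 1)) *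
      ∑ A : Cay d ρ, ∏ s ∈ Finset.univ.erase ρ,
        (MvPolynomial.X (s, A.1 s) : MvPolynomial (Fin d × Fin d) ℤ) := by
    classical
  trans (∑ p : Cay d ρ × (∀ s : Fin d, Fin (n s - 1) → Fin d),
      (∏ s ∈ Finset.univ.erase ρ,
        (MvPolynomial.X (s, p.1.1 s) : MvPolynomial (Fin d × Fin d) ℤ)) *
        ∏ s : Fin d, ∏ j : Fin (n s - 1), MvPolynomial.X (s, p.2 s j))
  · rw [← Equiv.sum_comp (starEquiv hn ρ).symm]
    refine Finset.sum_congr rfl fun p _ => ?_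
    have hT : ((starEquiv hn ρ).symm p).1 = mk hn p.1 p.2 := rfl
    rw [hT]
    calc ∏ s : Fin d, ∏ t : Fin d,
        (MvPolynomial.X (s, t) : MvPolynomial (Fin d × Fin d) ℤ) ^
          (mk hn p.1 p.2).ch s ⟨t, ⟨0, hn t⟩⟩
        = ∏ s : Fin d, ((if s = ρ then 1 else MvPolynomial.X (s, p.1.1 s)) *
            ∏ j : Fin (n s - 1), MvPolynomial.X (s, p.2 s j)) := by
          refine Finset.prod_congr rfl fun s _ => ?_
          rw [prod_ch_eq (mk hn p.1 p.2) (mk_star hn p.1 p.2) hn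
            (rfl : (mk hn p.1 p.2).root.1 = ρ) s]
          exact mk_prod hn p.1 p.2 s
      _ = _ := by
          rw [Finset.prod_mul_distrib]
          congr 1
          rw [← Finset.prod_erase Finset.univ
            (f := fun s => if s = ρ then 1 else
              (MvPolynomial.X (s, p.1.1 s) : MvPolynomial (Fin d × Fin d) ℤ))
            (a := ρ) (if_pos rfl)]
          exact Finset.prod_congr rfl fun s hs => if_neg (Finset.mem_erase.1 hs).1
  · have hC : (∏ s : Fin d,
        (∑ t : Fin d, (MvPolynomial.X (s, t) : MvPolynomial (Fin d × Fin d) ℤ)) ^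
          (n s - 1))
        = ∑ F : ∀ s : Fin d, Fin (n s - 1) → Fin d,
            ∏ s : Fin d, ∏ j : Fin (n s - 1), MvPolynomial.X (s, F s j) := by
      calc ∏ s : Fin d, (∑ t : Fin d,
          (MvPolynomial.X (s, t) : MvPolynomial (Fin d × Fin d) ℤ)) ^ (n s - 1)
          = ∏ s : Fin d, ∑ g : Fin (n s - 1) → Fin d,
              ∏ j : Fin (n s - 1), MvPolynomial.X (s, g j) := by
            refine Finset.prod_congr rfl fun s _ => ?_
            rw [Fintype.sum_pow]
        _ = _ := Fintype.prod_sum _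
    rw [hC, Finset.sum_mul_sum, Fintype.sum_prod_type, Finset.sum_comm]
    exact Finset.sum_congr rfl fun F _ => Finset.sum_congr rfl fun A _ => mul_comm _ _
end

section
/- Fix d ≥ 1, a tuple n = (n_1,…,n_d) of positive integers, and ρ ∈ [d]. Let γ = (γ_{s,t,i})_{s,t∈[d], i∈[n_t]} be a tuple of nonnegative integers and set m_{s,t} = Σ_{i∈[n_t]} γ_{s,t,i}. If n_s = δ_{s,ρ} + Σ_{t∈[d]} m_{s,t} for all s ∈ [d], then |T_{ρ,γ}| = ( ∏_{t∈[d]} (n_t−1)! / ∏_{s,t∈[d], i∈[n_t]} γ_{s,t,i}! ) · Σ_{A ∈ Cay_d^ρ} ∏_{(s,t)∈A} m_{s,t}; otherwise |T_{ρ,γ}| = 0. -/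
open scoped Classical

namespace MCT

lemma exists_pred {α : Type*} (f : α → α) (r : α) :
    ∀ (k : ℕ) (u : α), f^[k] u = r → u ≠ r → ∃ j, f^[j] u ≠ r ∧ f (f^[j] u) = r := by
  intro k
  induction k with
  | zero => intro u h hu; exact absurd h hu
  | succ k ih =>
    intro u h hu
    by_cases h1 : f u = r
    · exact ⟨0, hu, h1⟩
    · obtain ⟨j, hj1, hj2⟩ := ih (f u) (by rwa [Function.iterate_succ_apply] at h) h1
      exact ⟨j + 1, by rwa [Function.iterate_succ_apply], by rwa [Function.iterate_succ_apply]⟩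

lemma iterate_agree {α : Type*} {f g : α → α} {s0 : α} (h : ∀ x, x ≠ s0 → g x = f x) :
    ∀ (k : ℕ) (u : α), (∀ j, f^[j] u ≠ s0) → g^[k] u = f^[k] u := by
  intro k
  induction k with
  | zero => intro u _; rfl
  | succ k ih =>
    intro u hu
    rw [Function.iterate_succ_apply', Function.iterate_succ_apply', ih u hu, h _ (hu k)]

variable {d : ℕ}

/-- Cayley trees on a sub-finset `S` of the types, rooted at `ρ ∈ S`, extended by
the identity outside `S`. -/
def CayOn (S : Finset (Fin d)) (ρ : Fin d) : Type :=
  {f : Fin d → Fin d // (∀ s, s ∉ S → f s = s) ∧ f ρ = ρ ∧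
    ∀ s ∈ S, f s ∈ S ∧ ∃ k, f^[k] s = ρ}

noncomputable instance (S : Finset (Fin d)) (ρ : Fin d) : Fintype (CayOn S ρ) :=
  Subtype.fintype _

lemma CayOn.iter_mem {S : Finset (Fin d)} {ρ : Fin d} (A : CayOn S ρ) {s : Fin d}
    (hs : s ∈ S) (j : ℕ) : A.1^[j] s ∈ S := by
  induction j with
  | zero => exact hs
  | succ j ih => rw [Function.iterate_succ_apply']; exact (A.2.2.2 _ ih).1

lemma CayOn.iter_ne {S : Finset (Fin d)} {ρ : Fin d} (A : CayOn S ρ) {s0 : Fin d}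
    (hs0ρ : s0 ≠ ρ) (hα : ∀ s ∈ S.erase ρ, A.1 s ≠ s0) {s : Fin d} (hs : s ∈ S)
    (hss0 : s ≠ s0) (j : ℕ) : A.1^[j] s ≠ s0 := by
  induction j with
  | zero => exact hss0
  | succ j ih =>
    rw [Function.iterate_succ_apply']
    rcases eq_or_ne (A.1^[j] s) ρ with h | h
    · rw [h, A.2.2.1]; exact fun hc => hs0ρ hc.symm
    · exact hα _ (Finset.mem_erase.2 ⟨h, A.iter_mem hs j⟩)

/-- If every entry of column `ρ` vanishes and `S` contains some `s1 ≠ ρ`, the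
Cayley-sum vanishes. -/
lemma G_zero (S : Finset (Fin d)) (ρ : Fin d) {s1 : Fin d} (hs1 : s1 ∈ S) (hs1ρ : s1 ≠ ρ)
    (M : Fin d → Fin d → ℕ) (hcol : ∀ s, M s ρ = 0) :
    ∑ A : CayOn S ρ, ∏ s ∈ S.erase ρ, M s (A.1 s) = 0 := by
  refine Finset.sum_eq_zero fun A _ => ?_
  obtain ⟨k, hk⟩ := (A.2.2.2 s1 hs1).2
  obtain ⟨j, hj1, hj2⟩ := exists_pred A.1 ρ k s1 hk hs1ρ
  exact Finset.prod_eq_zero (Finset.mem_erase.2 ⟨hj1, A.iter_mem hs1 j⟩) (by rw [hj2]; exact hcol _)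

/-- Main algebraic identity for the induction step (type `s0` stays nonempty). -/
lemma identity_main (S : Finset (Fin d)) (ρ s0 : Fin d) (hs0 : s0 ∈ S)
    (M : Fin d → Fin d → ℕ) :
    ∑ u : Fin d, (M s0 u : ℚ) *
        ∑ A : CayOn S ρ, ∏ s ∈ S.erase ρ,
          ((M s (A.1 s) - if s = s0 ∧ A.1 s = u then 1 else 0 : ℕ) : ℚ)
      = ((∑ u : Fin d, (M s0 u : ℚ)) - if s0 = ρ then 0 else 1) *
          ∑ A : CayOn S ρ, ∏ s ∈ S.erase ρ, (M s (A.1 s) : ℚ) := by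
  by_cases hρ : s0 = ρ
  · subst hρ
    simp only [eq_self_iff_true, if_true, sub_zero]
    rw [Finset.sum_mul]
    refine Finset.sum_congr rfl fun u _ => ?_
    congr 1
    refine Finset.sum_congr rfl fun A _ => Finset.prod_congr rfl fun s hs => ?_
    have : ¬(s = s0 ∧ A.1 s = u) := fun hc => (Finset.mem_erase.1 hs).1 (hc.1)
    rw [if_neg this, Nat.sub_zero]
  · -- s0 ≠ ρ
    have hs0e : s0 ∈ S.erase ρ := Finset.mem_erase.2 ⟨hρ, hs0⟩
    rw [if_neg hρ]
    -- step 1: replace ℕ-subtraction casts by ℚ subtraction, keeping the coefficient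
    have step1 : ∀ u : Fin d, (M s0 u : ℚ) *
        (∑ A : CayOn S ρ, ∏ s ∈ S.erase ρ,
          ((M s (A.1 s) - if s = s0 ∧ A.1 s = u then 1 else 0 : ℕ) : ℚ))
        = (M s0 u : ℚ) * ∑ A : CayOn S ρ, ∏ s ∈ S.erase ρ,
            ((M s (A.1 s) : ℚ) - if s = s0 ∧ A.1 s = u then 1 else 0) := by
      intro u
      rcases Nat.eq_zero_or_pos (M s0 u) with h | h
      · rw [h]; push_cast; ring
      · congr 1
        refine Finset.sum_congr rfl fun A _ => Finset.prod_congr rfl fun s _ => ?_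
        by_cases hc : s = s0 ∧ A.1 s = u
        · obtain ⟨rfl, hc2⟩ := hc
          rw [if_pos ⟨rfl, hc2⟩, if_pos ⟨rfl, hc2⟩, Nat.cast_sub (by rw [hc2]; exact h)]
          norm_num
        · rw [if_neg hc, if_neg hc, Nat.sub_zero, sub_zero]
    calc
      ∑ u : Fin d, (M s0 u : ℚ) *
          ∑ A : CayOn S ρ, ∏ s ∈ S.erase ρ,
            ((M s (A.1 s) - if s = s0 ∧ A.1 s = u then 1 else 0 : ℕ) : ℚ)
        = ∑ u : Fin d, ∑ A : CayOn S ρ, (M s0 u : ℚ) *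
            (((M s0 (A.1 s0) : ℚ) - if A.1 s0 = u then 1 else 0) *
              ∏ s ∈ (S.erase ρ).erase s0, (M s (A.1 s) : ℚ)) := by
          refine Finset.sum_congr rfl fun u _ => ?_
          rw [step1 u, Finset.mul_sum]
          refine Finset.sum_congr rfl fun A _ => ?_
          congr 1
          rw [← Finset.mul_prod_erase _ _ hs0e]
          congr 1
          · simp
          · refine Finset.prod_congr rfl fun s hs => ?_
            have : ¬(s = s0 ∧ A.1 s = u) := fun hc => (Finset.mem_erase.1 hs).1 hc.1
            rw [if_neg this, sub_zero]
      _ = ∑ A : CayOn S ρ, ∑ u : Fin d, (M s0 u : ℚ) *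
            (((M s0 (A.1 s0) : ℚ) - if A.1 s0 = u then 1 else 0) *
              ∏ s ∈ (S.erase ρ).erase s0, (M s (A.1 s) : ℚ)) := Finset.sum_comm
      _ = ∑ A : CayOn S ρ, ((∑ u : Fin d, (M s0 u : ℚ)) - 1) *
            ((M s0 (A.1 s0) : ℚ) * ∏ s ∈ (S.erase ρ).erase s0, (M s (A.1 s) : ℚ)) := by
          refine Finset.sum_congr rfl fun A _ => ?_
          have h1 : (∑ u : Fin d, if A.1 s0 = u then (M s0 u : ℚ) else 0) = M s0 (A.1 s0) := by
            rw [Finset.sum_ite_eq (Finset.univ) (A.1 s0) (fun u => (M s0 u : ℚ))]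
            simp
          calc ∑ u : Fin d, (M s0 u : ℚ) *
                (((M s0 (A.1 s0) : ℚ) - if A.1 s0 = u then 1 else 0) *
                  ∏ s ∈ (S.erase ρ).erase s0, (M s (A.1 s) : ℚ))
              = (∑ u : Fin d, ((M s0 u : ℚ) * (M s0 (A.1 s0) : ℚ) -
                  (if A.1 s0 = u then (M s0 u : ℚ) else 0))) *
                  ∏ s ∈ (S.erase ρ).erase s0, (M s (A.1 s) : ℚ) := by
                rw [Finset.sum_mul]
                refine Finset.sum_congr rfl fun u _ => ?_
                by_cases hc : A.1 s0 = u
                · subst hc; rw [if_pos rfl, if_pos rfl]; ring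
                · rw [if_neg hc, if_neg hc]; ring
            _ = ((∑ u : Fin d, (M s0 u : ℚ)) - 1) *
                  ((M s0 (A.1 s0) : ℚ) * ∏ s ∈ (S.erase ρ).erase s0, (M s (A.1 s) : ℚ)) := by
                rw [Finset.sum_sub_distrib, ← Finset.sum_mul, h1]; ring
      _ = ((∑ u : Fin d, (M s0 u : ℚ)) - 1) *
            ∑ A : CayOn S ρ, ∏ s ∈ S.erase ρ, (M s (A.1 s) : ℚ) := by
          rw [Finset.mul_sum]
          refine Finset.sum_congr rfl fun A _ => ?_
          rw [Finset.mul_prod_erase (S.erase ρ) (fun s => (M s (A.1 s) : ℚ)) hs0e]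

/-- Identity for the induction step when type `s0` becomes empty. -/
lemma identity_erase (S : Finset (Fin d)) (ρ s0 : Fin d) (hρ : ρ ∈ S) (hs0 : s0 ∈ S)
    (hs0ρ : s0 ≠ ρ) (M : Fin d → Fin d → ℕ) (hcol : ∀ s, M s s0 = 0)
    (hrow : ∑ t : Fin d, M s0 t = 1) (hsupp : ∀ t, M s0 t ≠ 0 → t ∈ S) :
    ∑ A : CayOn S ρ, ∏ s ∈ S.erase ρ, M s (A.1 s)
      = ∑ A : CayOn (S.erase s0) ρ, ∏ s ∈ (S.erase s0).erase ρ, M s (A.1 s) := by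
  have hs0e : s0 ∈ S.erase ρ := Finset.mem_erase.2 ⟨hs0ρ, hs0⟩
  -- extract the unique `u` with `M s0 u = 1`
  obtain ⟨u, hu0⟩ : ∃ u, M s0 u ≠ 0 := by
    by_contra hc
    push_neg at hc
    rw [Finset.sum_eq_zero fun t _ => hc t] at hrow
    exact absurd hrow (by norm_num)
  have husum : M s0 u + ∑ t ∈ Finset.univ.erase u, M s0 t = 1 := by
    rw [Finset.add_sum_erase _ _ (Finset.mem_univ u)]; exact hrow
  have hu1 : M s0 u = 1 := by omega
  have hrest : ∑ t ∈ Finset.univ.erase u, M s0 t = 0 := by omega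
  have hnot : ∀ t, t ≠ u → M s0 t = 0 := by
    intro t ht
    have := (Finset.sum_eq_zero_iff.1 hrest) t (Finset.mem_erase.2 ⟨ht, Finset.mem_univ t⟩)
    exact this
  have huS : u ∈ S := hsupp u hu0
  have hus0 : u ≠ s0 := fun hc => hu0 (hc ▸ hcol s0)
  have huS' : u ∈ S.erase s0 := Finset.mem_erase.2 ⟨hus0, huS⟩
  -- restrict to nonzero summands
  rw [← Finset.sum_filter_ne_zero (Finset.univ : Finset (CayOn S ρ)),
      ← Finset.sum_filter_ne_zero (Finset.univ : Finset (CayOn (S.erase s0) ρ))]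
  refine Finset.sum_bij' (i := ?_) (j := ?_) ?_ ?_ ?_ ?_ ?_
  · -- i
    intro A hA
    refine ⟨fun s => if s = s0 then s0 else A.1 s, ?_, ?_, ?_⟩
    · intro s hs
      dsimp only
      by_cases h : s = s0
      · rw [if_pos h, h]
      · rw [if_neg h]
        exact A.2.1 s fun hc => hs (Finset.mem_erase.2 ⟨h, hc⟩)
    · dsimp only
      rw [if_neg (Ne.symm hs0ρ), A.2.2.1]
    · intro s hs
      dsimp only
      have hA' : ∀ s ∈ S.erase ρ, M s (A.1 s) ≠ 0 :=
        Finset.prod_ne_zero_iff.1 (Finset.mem_filter.1 hA).2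
      have havoid : ∀ s ∈ S.erase ρ, A.1 s ≠ s0 := fun s hs hc => hA' s hs (hc ▸ hcol s)
      have hsS : s ∈ S := (Finset.mem_erase.1 hs).2
      have hss0 : s ≠ s0 := (Finset.mem_erase.1 hs).1
      have hiter : ∀ j, A.1^[j] s ≠ s0 := A.iter_ne hs0ρ havoid hsS hss0
      constructor
      · rw [if_neg hss0]
        refine Finset.mem_erase.2 ⟨?_, (A.2.2.2 s hsS).1⟩
        exact hiter 1
      · obtain ⟨k, hk⟩ := (A.2.2.2 s hsS).2
        refine ⟨k, ?_⟩
        rw [iterate_agree (f := A.1) (fun x hx => if_neg hx) k s hiter]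
        exact hk
  · -- j
    intro A' hA'
    refine ⟨fun s => if s = s0 then u else A'.1 s, ?_, ?_, ?_⟩
    · intro s hs
      dsimp only
      have hss0 : s ≠ s0 := fun hc => hs (hc ▸ hs0)
      rw [if_neg hss0]
      exact A'.2.1 s fun hc => hs (Finset.mem_erase.1 hc).2
    · dsimp only
      rw [if_neg (Ne.symm hs0ρ), A'.2.2.1]
    · intro s hs
      dsimp only
      have hiter : ∀ (x : Fin d), x ∈ S.erase s0 → ∀ j, A'.1^[j] x ≠ s0 :=
        fun x hx j => (Finset.mem_erase.1 (A'.iter_mem hx j)).1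
      by_cases h : s = s0
      · subst h
        constructor
        · rw [if_pos rfl]; exact huS
        · obtain ⟨k, hk⟩ := (A'.2.2.2 u huS').2
          refine ⟨k + 1, ?_⟩
          rw [Function.iterate_succ_apply, if_pos rfl,
            iterate_agree (f := A'.1) (fun x hx => if_neg hx) k u (hiter u huS')]
          exact hk
      · have hsS' : s ∈ S.erase s0 := Finset.mem_erase.2 ⟨h, hs⟩
        constructor
        · rw [if_neg h]
          exact (Finset.mem_erase.1 (A'.2.2.2 s hsS').1).2
        · obtain ⟨k, hk⟩ := (A'.2.2.2 s hsS').2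
          refine ⟨k, ?_⟩
          rw [iterate_agree (f := A'.1) (fun x hx => if_neg hx) k s (hiter s hsS')]
          exact hk
  · -- hi : i a ∈ filter
    intro A hA
    have hA' : ∀ s ∈ S.erase ρ, M s (A.1 s) ≠ 0 :=
      Finset.prod_ne_zero_iff.1 (Finset.mem_filter.1 hA).2
    refine Finset.mem_filter.2 ⟨Finset.mem_univ _, ?_⟩
    refine Finset.prod_ne_zero_iff.2 fun s hs => ?_
    have hss0 : s ≠ s0 := by
      have := (Finset.mem_erase.1 ((Finset.mem_erase.1 hs).2)).1
      exact this
    simp only [if_neg hss0]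
    exact hA' s (Finset.mem_erase.2 ⟨(Finset.mem_erase.1 hs).1, (Finset.mem_erase.1 (Finset.mem_erase.1 hs).2).2⟩)
  · -- hj
    intro A' hA'
    refine Finset.mem_filter.2 ⟨Finset.mem_univ _, ?_⟩
    rw [← Finset.mul_prod_erase _ _ hs0e]
    refine mul_ne_zero (by simpa using hu0) ?_
    rw [Finset.erase_right_comm]
    refine Finset.prod_ne_zero_iff.2 fun s hs => ?_
    have hss0 : s ≠ s0 := (Finset.mem_erase.1 (Finset.mem_erase.1 hs).2).1
    dsimp only
    rw [if_neg hss0]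
    exact (Finset.prod_ne_zero_iff.1 (Finset.mem_filter.1 hA').2) s hs
  · -- left inverse
    intro A hA
    have hA' := Finset.prod_ne_zero_iff.1 (Finset.mem_filter.1 hA).2
    have hAs0 : A.1 s0 = u := by
      by_contra hc
      exact hA' s0 hs0e (hnot _ hc)
    apply Subtype.ext
    funext s
    dsimp only
    by_cases h : s = s0
    · subst h
      rw [if_pos rfl, hAs0]
    · rw [if_neg h, if_neg h]
  · -- right inverse
    intro A' hA'
    apply Subtype.ext
    funext s
    dsimp only
    by_cases h : s = s0
    · rw [if_pos h, h]
      exact (A'.2.1 s0 (fun hc => (Finset.mem_erase.1 hc).1 rfl)).symm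
    · rw [if_neg h, if_neg h]
  · -- value equality
    intro A hA
    have hA' := Finset.prod_ne_zero_iff.1 (Finset.mem_filter.1 hA).2
    have hAs0 : A.1 s0 = u := by
      by_contra hc
      exact hA' s0 hs0e (hnot _ hc)
    conv_lhs => rw [← Finset.mul_prod_erase _ _ hs0e]
    rw [hAs0, hu1, one_mul, Finset.erase_right_comm]
    refine Finset.prod_congr rfl fun s hs => ?_
    have hss0 : s ≠ s0 := (Finset.mem_erase.1 (Finset.mem_erase.1 hs).2).1
    dsimp only
    rw [if_neg hss0]

section VSec

variable {V : Type} [Fintype V]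

/-- number of vertices of type `t` -/
noncomputable def ntc (τ : V → Fin d) (t : Fin d) : ℕ := ∑ v : V, if τ v = t then 1 else 0

/-- number of type-`s` children of type-`t` vertices (prescribed by `γ`) -/
noncomputable def mm (τ : V → Fin d) (γ : Fin d → V → ℕ) (s t : Fin d) : ℕ :=
  ∑ v : V, if τ v = t then γ s v else 0

/-- number of type-`a` children of `w` -/
noncomputable def chF (τ : V → Fin d) (r : V) (f : V → V) (a : Fin d) (w : V) : ℕ :=
  ∑ v : V, if τ v = a ∧ v ≠ r ∧ f v = w then 1 else 0

/-- rooted trees with root type `ρ` and child counts `γ` -/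
def Good (τ : V → Fin d) (ρ : Fin d) (γ : Fin d → V → ℕ) : Type :=
  {p : V × (V → V) // (p.2 p.1 = p.1 ∧ ∀ v, ∃ k, p.2^[k] v = p.1) ∧ τ p.1 = ρ ∧
    ∀ a w, chF τ p.1 p.2 a w = γ a w}

noncomputable instance (τ : V → Fin d) (ρ : Fin d) (γ : Fin d → V → ℕ) :
    Fintype (Good τ ρ γ) := Subtype.fintype _

lemma sum_ntc (τ : V → Fin d) : ∑ t : Fin d, ntc τ t = Fintype.card V := by
  unfold ntc
  rw [Finset.sum_comm]
  have : ∀ v : V, (∑ t : Fin d, if τ v = t then 1 else 0) = 1 := by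
    intro v
    rw [Finset.sum_ite_eq Finset.univ (τ v) (fun _ => 1), if_pos (Finset.mem_univ _)]
  simp only [this]
  rw [Finset.sum_const, smul_eq_mul, mul_one, Finset.card_univ]

lemma sum_mm (τ : V → Fin d) (γ : Fin d → V → ℕ) (s : Fin d) :
    ∑ t : Fin d, mm τ γ s t = ∑ v : V, γ s v := by
  unfold mm
  rw [Finset.sum_comm]
  refine Finset.sum_congr rfl fun v _ => ?_
  rw [Finset.sum_ite_eq Finset.univ (τ v) (fun _ => γ s v), if_pos (Finset.mem_univ _)]

lemma split_v0 {M : Type*} [AddCommMonoid M] (v0 : V) (F : V → M) :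
    ∑ v : V, F v = F v0 + ∑ v : {v : V // v ≠ v0}, F v.1 := by
  rw [← Finset.sum_subtype (Finset.univ.erase v0)
    (fun x => by simp [Finset.mem_erase]) F]
  rw [← Finset.sum_erase_add Finset.univ F (Finset.mem_univ v0)]
  exact (add_comm _ _)

/-- a tree forces the degree condition -/
lemma degree_cond {τ : V → Fin d} {ρ : Fin d} {γ : Fin d → V → ℕ} (T : Good τ ρ γ)
    (s : Fin d) : ntc τ s = (if s = ρ then 1 else 0) + ∑ t : Fin d, mm τ γ s t := by
  obtain ⟨⟨r, f⟩, ⟨hfix, hreach⟩, hrt, hch⟩ := T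
  replace hfix : f r = r := hfix
  replace hreach : ∀ v : V, ∃ k, f^[k] v = r := hreach
  replace hrt : τ r = ρ := hrt
  replace hch : ∀ a w, chF τ r f a w = γ a w := hch
  have h1 : ∑ t : Fin d, mm τ γ s t = ∑ w : V, chF τ r f s w := by
    rw [sum_mm]
    refine (Finset.sum_congr rfl fun w _ => ?_).symm
    exact hch s w
  have h2 : ∑ w : V, chF τ r f s w = ∑ v : V, if τ v = s ∧ v ≠ r then 1 else 0 := by
    unfold chF
    rw [Finset.sum_comm]
    refine Finset.sum_congr rfl fun v _ => ?_
    by_cases hP : τ v = s ∧ v ≠ r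
    · have : ∀ w : V, (if τ v = s ∧ v ≠ r ∧ f v = w then 1 else 0)
          = if f v = w then 1 else 0 := by
        intro w
        by_cases hw : f v = w
        · rw [if_pos ⟨hP.1, hP.2, hw⟩, if_pos hw]
        · rw [if_neg (fun hc => hw hc.2.2), if_neg hw]
      rw [if_pos hP]
      simp only [this]
      rw [Finset.sum_ite_eq Finset.univ (f v) (fun _ => 1), if_pos (Finset.mem_univ _)]
    · rw [if_neg hP]
      refine Finset.sum_eq_zero fun w _ => ?_
      refine if_neg fun hc => hP ⟨hc.1, hc.2.1⟩
  have h3 : ntc τ s = (if s = ρ then 1 else 0) + ∑ v : V, if τ v = s ∧ v ≠ r then 1 else 0 := by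
    unfold ntc
    have : ∀ v : V, (if τ v = s then 1 else 0)
        = (if v = r then (if τ v = s then 1 else 0) else 0) + (if τ v = s ∧ v ≠ r then 1 else 0) := by
      intro v
      by_cases hv : v = r
      · rw [if_pos hv, if_neg (show ¬(τ v = s ∧ v ≠ r) from fun hc => hc.2 hv), add_zero]
      · rw [if_neg hv]
        by_cases ht : τ v = s
        · rw [if_pos ht, if_pos (show τ v = s ∧ v ≠ r from ⟨ht, hv⟩), zero_add]
        · rw [if_neg ht, if_neg (show ¬(τ v = s ∧ v ≠ r) from fun hc => ht hc.1), zero_add]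
    rw [Finset.sum_congr rfl (fun v _ => this v), Finset.sum_add_distrib]
    congr 1
    rw [Finset.sum_ite_eq' Finset.univ r (fun v => if τ v = s then 1 else 0),
      if_pos (Finset.mem_univ r), hrt]
    by_cases hs : s = ρ
    · rw [if_pos hs.symm, if_pos hs]
    · rw [if_neg (fun hc => hs hc.symm), if_neg hs]
  rw [h3, h1, h2]

/-- in a tree with ≥ 2 vertices, a vertex prescribed to have no children is
never a parent (in particular never the root) -/
lemma no_child {τ : V → Fin d} {ρ : Fin d} {γ : Fin d → V → ℕ} {v0 : V}
    (hcard : 2 ≤ Fintype.card V) (hγ0 : ∀ s, γ s v0 = 0) (T : Good τ ρ γ) :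
    ∀ x, T.1.2 x ≠ v0 := by
  obtain ⟨⟨r, f⟩, ⟨hfix, hreach⟩, hrt, hch⟩ := T
  replace hfix : f r = r := hfix
  replace hreach : ∀ v : V, ∃ k, f^[k] v = r := hreach
  replace hrt : τ r = ρ := hrt
  replace hch : ∀ a w, chF τ r f a w = γ a w := hch
  show ∀ x, f x ≠ v0
  have step0 : ∀ v, v ≠ r → f v ≠ v0 := by
    intro v hv hc
    have h1 : (1 : ℕ) ≤ chF τ r f (τ v) v0 := by
      unfold chF
      have : v ∈ Finset.univ := Finset.mem_univ v
      refine le_trans ?_ (Finset.single_le_sum (fun i _ => Nat.zero_le _) this)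
      rw [if_pos ⟨rfl, hv, hc⟩]
    rw [hch] at h1
    rw [hγ0] at h1
    omega
  have step1 : r ≠ v0 := by
    intro hc
    obtain ⟨u, hu⟩ := Fintype.exists_ne_of_one_lt_card (by omega) r
    obtain ⟨k, hk⟩ := hreach u
    obtain ⟨j, hj1, hj2⟩ := exists_pred f r k u hk hu
    exact step0 _ hj1 (by rw [hj2, hc])
  intro x
  by_cases hx : x = r
  · rw [hx, hfix]; exact step1
  · exact step0 x hx

end VSec

lemma ite_one_congr {p q : Prop} [Decidable p] [Decidable q] (h : p ↔ q) :
    (if p then (1 : ℕ) else 0) = if q then 1 else 0 := by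
  by_cases hp : p
  · rw [if_pos hp, if_pos (h.1 hp)]
  · rw [if_neg hp, if_neg (fun hq => hp (h.2 hq))]

section Del

variable {V : Type} [Fintype V]

lemma ntc_del (τ : V → Fin d) (v0 : V) (t : Fin d) :
    ntc τ t = ntc (fun v : {v : V // v ≠ v0} => τ v.1) t + (if τ v0 = t then 1 else 0) := by
  unfold ntc
  rw [split_v0 v0]
  exact add_comm _ _

lemma mm_del (τ : V → Fin d) (γ : Fin d → V → ℕ) (v0 : V) (hγ0 : ∀ s, γ s v0 = 0)
    (w : {v : V // v ≠ v0}) (hw : 0 < γ (τ v0) w.1) (s t : Fin d) :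
    mm τ γ s t = mm (fun v : {v : V // v ≠ v0} => τ v.1)
        (fun a v => if a = τ v0 ∧ v.1 = w.1 then γ a v.1 - 1 else γ a v.1) s t
      + (if s = τ v0 ∧ t = τ w.1 then 1 else 0) := by
  unfold mm
  rw [split_v0 v0 (fun v => if τ v = t then γ s v else 0)]
  rw [show (if τ v0 = t then γ s v0 else 0) = 0 by
    by_cases h : τ v0 = t
    · rw [if_pos h, hγ0]
    · rw [if_neg h]]
  rw [zero_add]
  have key : ∀ v' : {v : V // v ≠ v0},
      (if τ v'.1 = t then γ s v'.1 else 0)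
        = (if τ v'.1 = t then (if s = τ v0 ∧ v'.1 = w.1 then γ s v'.1 - 1 else γ s v'.1) else 0)
          + (if v' = w then (if s = τ v0 ∧ t = τ w.1 then 1 else 0) else 0) := by
    intro v'
    by_cases hv : v' = w
    · subst hv
      rw [if_pos rfl]
      by_cases hs : s = τ v0
      · have hpos : 0 < γ s v'.1 := by rw [hs]; exact hw
        by_cases ht : τ v'.1 = t
        · rw [if_pos ht, if_pos ht, if_pos (show s = τ v0 ∧ v'.1 = v'.1 from ⟨hs, rfl⟩),
            if_pos (show s = τ v0 ∧ t = τ v'.1 from ⟨hs, ht.symm⟩)]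
          omega
        · rw [if_neg ht, if_neg ht,
            if_neg (show ¬(s = τ v0 ∧ t = τ v'.1) from fun hc => ht hc.2.symm), add_zero]
      · by_cases ht : τ v'.1 = t
        · rw [if_pos ht, if_pos ht, if_neg (show ¬(s = τ v0 ∧ v'.1 = v'.1) from fun hc => hs hc.1),
            if_neg (show ¬(s = τ v0 ∧ t = τ v'.1) from fun hc => hs hc.1), add_zero]
        · rw [if_neg ht, if_neg ht,
            if_neg (show ¬(s = τ v0 ∧ t = τ v'.1) from fun hc => hs hc.1), add_zero]
    · rw [if_neg hv, add_zero]
      have hne : ¬(s = τ v0 ∧ v'.1 = w.1) := fun hc => hv (Subtype.ext hc.2)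
      by_cases ht : τ v'.1 = t
      · rw [if_pos ht, if_pos ht, if_neg hne]
      · rw [if_neg ht, if_neg ht]
  rw [Finset.sum_congr rfl (fun v' _ => key v'), Finset.sum_add_distrib]
  congr 1
  rw [Finset.sum_ite_eq' Finset.univ w
    (fun _ => if s = τ v0 ∧ t = τ w.1 then 1 else 0), if_pos (Finset.mem_univ w)]

lemma ch_del (τ : V → Fin d) (v0 : V) (r : V) (hr : r ≠ v0) (f : V → V)
    (hf : ∀ x, f x ≠ v0) (a : Fin d) (b : {v : V // v ≠ v0}) :
    chF τ r f a b.1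
      = chF (fun v : {v : V // v ≠ v0} => τ v.1) ⟨r, hr⟩
          (fun v => ⟨f v.1, hf v.1⟩) a b
        + (if τ v0 = a ∧ f v0 = b.1 then 1 else 0) := by
  unfold chF
  rw [split_v0 v0 (fun v => if τ v = a ∧ v ≠ r ∧ f v = b.1 then 1 else 0)]
  rw [add_comm]
  congr 1
  · refine Finset.sum_congr rfl fun v' _ => ?_
    congr 1
    apply propext
    constructor
    · rintro ⟨h1, h2, h3⟩
      exact ⟨h1, fun hc => h2 (congrArg Subtype.val hc), Subtype.ext h3⟩
    · rintro ⟨h1, h2, h3⟩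
      exact ⟨h1, fun hc => h2 (Subtype.ext hc), congrArg Subtype.val h3⟩
  · congr 1
    apply propext
    constructor
    · rintro ⟨h1, _, h3⟩; exact ⟨h1, h3⟩
    · rintro ⟨h1, h3⟩; exact ⟨h1, fun hc => hr hc.symm, h3⟩

end Del

section Del2

variable {V : Type} [Fintype V]

lemma root_ne {τ : V → Fin d} {ρ : Fin d} {γ : Fin d → V → ℕ} {v0 : V}
    (hcard : 2 ≤ Fintype.card V) (hγ0 : ∀ s, γ s v0 = 0) (T : Good τ ρ γ) :
    T.1.1 ≠ v0 :=
  fun hc => (no_child hcard hγ0 T) T.1.1 (T.2.1.1.trans hc)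

lemma fwd_iter {v0 : V} (f : V → V) (hf : ∀ x, f x ≠ v0) (k : ℕ) (v : {v : V // v ≠ v0}) :
    (((fun v : {v : V // v ≠ v0} => (⟨f v.1, hf v.1⟩ : {v : V // v ≠ v0}))^[k] v) : {v : V // v ≠ v0}).1
      = f^[k] v.1 := by
  induction k with
  | zero => rfl
  | succ k ih => rw [Function.iterate_succ_apply', Function.iterate_succ_apply', ← ih]

lemma card_del (τ : V → Fin d) (ρ : Fin d) (γ : Fin d → V → ℕ) (v0 : V)
    (hγ0 : ∀ s, γ s v0 = 0) (hcard : 2 ≤ Fintype.card V)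
    (w : {v : V // v ≠ v0}) (hw : 0 < γ (τ v0) w.1) :
    Nat.card {T : Good τ ρ γ // T.1.2 v0 = w.1}
      = Nat.card (Good (fun v : {v : V // v ≠ v0} => τ v.1) ρ
          (fun a v => if a = τ v0 ∧ v.1 = w.1 then γ a v.1 - 1 else γ a v.1)) := by
  apply Nat.card_congr
  refine ⟨fun T => ⟨(⟨T.1.1.1, root_ne hcard hγ0 T.1⟩,
      fun v => ⟨T.1.1.2 v.1, no_child hcard hγ0 T.1 v.1⟩), ?_, ?_, ?_⟩,
    fun T' => ⟨⟨(T'.1.1.1, fun v => if h : v = v0 then w.1 else (T'.1.2 ⟨v, h⟩).1), ?_, ?_, ?_⟩, ?_⟩,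
    ?_, ?_⟩
  · -- fwd : tree conditions
    constructor
    · exact Subtype.ext T.1.2.1.1
    · intro v
      obtain ⟨k, hk⟩ := T.1.2.1.2 v.1
      refine ⟨k, Subtype.ext ?_⟩
      dsimp only
      rw [fwd_iter T.1.1.2 (no_child hcard hγ0 T.1) k v]
      exact hk
  · -- fwd : root type
    exact T.1.2.2.1
  · -- fwd : child counts
    intro a b
    have hch := T.1.2.2.2
    have hv0 : T.1.1.2 v0 = w.1 := T.2
    have heq := ch_del τ v0 T.1.1.1 (root_ne hcard hγ0 T.1) T.1.1.2
      (no_child hcard hγ0 T.1) a b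
    rw [hch a b.1] at heq
    dsimp only
    by_cases hc : a = τ v0 ∧ b.1 = w.1
    · rw [if_pos hc]
      rw [if_pos ⟨hc.1.symm, hv0.trans hc.2.symm⟩] at heq
      omega
    · rw [if_neg hc]
      rw [if_neg (fun h2 => hc ⟨h2.1.symm, h2.2.symm.trans hv0⟩)] at heq
      omega
  · -- bwd : tree conditions
    have hfix' := T'.2.1.1
    have hr : T'.1.1.1 ≠ v0 := T'.1.1.2
    constructor
    · dsimp only
      rw [dif_neg hr]
      have : (⟨T'.1.1.1, hr⟩ : {v : V // v ≠ v0}) = T'.1.1 := rfl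
      rw [this, hfix']
    · -- reachability
      have hbit : ∀ (k : ℕ) (v : {v : V // v ≠ v0}),
          (fun v : V => if h : v = v0 then w.1 else (T'.1.2 ⟨v, h⟩).1)^[k] v.1
            = (T'.1.2^[k] v).1 := by
        intro k
        induction k with
        | zero => intro v; rfl
        | succ k ih =>
          intro v
          rw [Function.iterate_succ_apply', Function.iterate_succ_apply', ih v]
          exact dif_neg (T'.1.2^[k] v).2
      intro v
      by_cases hv : v = v0
      · obtain ⟨k, hk⟩ := T'.2.1.2 w
        refine ⟨k + 1, ?_⟩
        rw [Function.iterate_succ_apply]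
        dsimp only
        rw [hv, dif_pos rfl, hbit k w, hk]
      · obtain ⟨k, hk⟩ := T'.2.1.2 ⟨v, hv⟩
        exact ⟨k, by rw [hbit k ⟨v, hv⟩, hk]⟩
  · -- bwd : root type
    exact T'.2.2.1
  · -- bwd : child counts
    intro a b
    have hf2 : ∀ x : V, (if h : x = v0 then w.1 else (T'.1.2 ⟨x, h⟩).1) ≠ v0 := by
      intro x
      by_cases h : x = v0
      · rw [dif_pos h]; exact w.2
      · rw [dif_neg h]; exact (T'.1.2 ⟨x, h⟩).2
    by_cases hb : b = v0
    · subst hb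
      rw [hγ0 a]
      refine Finset.sum_eq_zero fun v _ => ?_
      exact if_neg fun hc => hf2 v hc.2.2
    · have hr : T'.1.1.1 ≠ v0 := T'.1.1.2
      have heq := ch_del τ v0 T'.1.1.1 hr
        (fun v : V => if h : v = v0 then w.1 else (T'.1.2 ⟨v, h⟩).1) hf2 a ⟨b, hb⟩
      have hfun : (fun v : {v : V // v ≠ v0} =>
          (⟨if h : v.1 = v0 then w.1 else (T'.1.2 ⟨v.1, h⟩).1, hf2 v.1⟩ : {v : V // v ≠ v0}))
            = T'.1.2 := by
        funext v
        refine Subtype.ext ?_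
        dsimp only
        rw [dif_neg v.2]
      rw [hfun] at heq
      have hroot : (⟨T'.1.1.1, hr⟩ : {v : V // v ≠ v0}) = T'.1.1 := rfl
      rw [hroot] at heq
      rw [T'.2.2.2 a ⟨b, hb⟩] at heq
      have hfv0 : (if h : v0 = v0 then w.1 else (T'.1.2 ⟨v0, h⟩).1) = w.1 := dif_pos rfl
      rw [hfv0] at heq
      dsimp only at heq ⊢
      by_cases hc : a = τ v0 ∧ b = w.1
      · rw [if_pos ⟨hc.1, hc.2⟩] at heq
        rw [if_pos ⟨hc.1.symm, hc.2.symm⟩] at heq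
        have hwpos : 0 < γ a b := by
          rw [hc.1, hc.2]; exact hw
        omega
      · rw [if_neg hc] at heq
        rw [if_neg (fun h2 => hc ⟨h2.1.symm, h2.2.symm⟩)] at heq
        omega
  · -- Gw condition for bwd
    exact dif_pos rfl
  · -- left inverse
    intro T
    refine Subtype.ext (Subtype.ext (Prod.ext rfl ?_))
    funext v
    by_cases hv : v = v0
    · dsimp only
      rw [dif_pos hv, hv]
      exact T.2.symm
    · dsimp only
      rw [dif_neg hv]
  · -- right inverse
    intro T'
    refine Subtype.ext (Prod.ext rfl ?_)
    funext v
    refine Subtype.ext ?_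
    dsimp only
    rw [dif_neg v.2]

end Del2

section Master

variable {V : Type} [Fintype V]

lemma split_v0_prod {M : Type*} [CommMonoid M] (v0 : V) (F : V → M) :
    ∏ v : V, F v = F v0 * ∏ v : {v : V // v ≠ v0}, F v.1 := by
  rw [← Finset.prod_subtype (Finset.univ.erase v0)
    (fun x => by simp [Finset.mem_erase]) F]
  rw [← Finset.prod_erase_mul Finset.univ F (Finset.mem_univ v0)]
  exact (mul_comm _ _)

lemma card_good_one (τ : V → Fin d) (ρ : Fin d) (γ : Fin d → V → ℕ) (r : V)
    (hall : ∀ v : V, v = r) (hrt : τ r = ρ) (hγ : ∀ a b, γ a b = 0) :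
    Nat.card (Good τ ρ γ) = 1 := by
  rw [Nat.card_eq_fintype_card, Fintype.card_eq_one_iff]
  refine ⟨⟨(r, fun v => v), ⟨rfl, fun v => ⟨0, hall v⟩⟩, hrt, fun a w => ?_⟩, ?_⟩
  · rw [hγ]
    refine Finset.sum_eq_zero fun v _ => ?_
    exact if_neg fun hc => hc.2.1 (hall v)
  · intro T
    refine Subtype.ext (Prod.ext ?_ ?_)
    · exact hall T.1.1
    · funext v
      exact (hall _).trans (hall _).symm

lemma card_cayon_singleton (ρ : Fin d) :
    Fintype.card (CayOn ({ρ} : Finset (Fin d)) ρ) = 1 := by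
  rw [Fintype.card_eq_one_iff]
  refine ⟨⟨id, fun s _ => rfl, rfl, fun s hs => ⟨hs, 0, Finset.mem_singleton.1 hs⟩⟩, ?_⟩
  intro A
  refine Subtype.ext (funext fun s => ?_)
  by_cases h : s = ρ
  · rw [h]; exact A.2.2.1
  · exact A.2.1 s (fun hc => h (Finset.mem_singleton.1 hc))

theorem master (ρ : Fin d) (N : ℕ) : ∀ (V : Type) [Fintype V],
    Fintype.card V = N → ∀ (τ : V → Fin d) (γ : Fin d → V → ℕ) (S : Finset (Fin d)),
    (∀ t, t ∈ S ↔ 0 < ntc τ t) →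
    (∀ s, ntc τ s = (if s = ρ then 1 else 0) + ∑ t : Fin d, mm τ γ s t) →
    (Nat.card (Good τ ρ γ) : ℚ)
      = (∏ t : Fin d, ((ntc τ t - 1).factorial : ℚ)) /
          (∏ v : V, ∏ s : Fin d, ((γ s v).factorial : ℚ)) *
        ∑ A : CayOn S ρ, ∏ s ∈ S.erase ρ, (mm τ γ s (A.1 s) : ℚ) := by
  induction N using Nat.strong_induction_on with
  | _ N IH =>
  intro V instV hN τ γ S hS hC
  have hρS : ρ ∈ S := (hS ρ).2 (by rw [hC ρ, if_pos rfl]; omega)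
  have huniveq : ∀ r : V, (∀ v : V, v = r) → (Finset.univ : Finset V) = {r} :=
    fun r hall => Finset.eq_singleton_iff_unique_mem.2 ⟨Finset.mem_univ r, fun v _ => hall v⟩
  rcases Nat.lt_or_ge N 2 with hN2 | hN2
  · rcases (show N = 0 ∨ N = 1 by omega) with h0 | h1
    · exfalso
      subst h0
      haveI : IsEmpty V := Fintype.card_eq_zero_iff.1 hN
      have hz : ntc τ ρ = 0 := by
        unfold ntc
        rw [Finset.univ_eq_empty, Finset.sum_empty]
      rw [hC ρ, if_pos rfl] at hz
      omega
    · subst h1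
      obtain ⟨r, hall⟩ := Fintype.card_eq_one_iff.1 hN
      have hmm0 : ∀ s t, mm τ γ s t = 0 := by
        have hsum : ∑ s : Fin d, ntc τ s = 1 := by rw [sum_ntc, hN]
        have h2 : ∑ s : Fin d, ((if s = ρ then 1 else 0) + ∑ t : Fin d, mm τ γ s t) = 1 := by
          rw [show (∑ s : Fin d, ((if s = ρ then 1 else 0) + ∑ t : Fin d, mm τ γ s t))
              = ∑ s : Fin d, ntc τ s from Finset.sum_congr rfl fun s _ => (hC s).symm]
          exact hsum
        rw [Finset.sum_add_distrib, Finset.sum_ite_eq' Finset.univ ρ (fun _ => 1),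
          if_pos (Finset.mem_univ ρ)] at h2
        have h3 : ∑ s : Fin d, ∑ t : Fin d, mm τ γ s t = 0 := by omega
        intro s t
        exact Finset.sum_eq_zero_iff.1
          (Finset.sum_eq_zero_iff.1 h3 s (Finset.mem_univ s)) t (Finset.mem_univ t)
      have hγr : ∀ a b, γ a b = 0 := by
        intro a b
        have := hmm0 a (τ r)
        unfold mm at this
        rw [huniveq r hall, Finset.sum_singleton, if_pos rfl] at this
        rw [hall b]; exact this
      have hntcr : ntc τ (τ r) = 1 := by
        unfold ntc
        rw [huniveq r hall, Finset.sum_singleton, if_pos rfl]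
      have hτr : τ r = ρ := by
        by_contra hτ
        have h5 := hC (τ r)
        rw [hntcr, if_neg hτ,
          Finset.sum_congr rfl (fun t _ => hmm0 (τ r) t), Finset.sum_const, smul_zero] at h5
        omega
      have hSsing : S = {ρ} := by
        refine Finset.ext fun t => ?_
        rw [hS t, Finset.mem_singleton]
        constructor
        · intro hpos
          obtain ⟨v, _, hv⟩ := Finset.exists_ne_zero_of_sum_ne_zero
            (show ntc τ t ≠ 0 by omega)
          by_cases hc : τ v = t
          · rw [← hc, hall v, hτr]
          · rw [if_neg hc] at hv; exact absurd rfl hv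
        · intro ht
          rw [ht, hC ρ, if_pos rfl]; omega
      rw [card_good_one τ ρ γ r hall hτr hγr]
      have hfac1 : ∏ t : Fin d, ((ntc τ t - 1).factorial : ℚ) = 1 := by
        refine Finset.prod_eq_one fun t _ => ?_
        have hle : ntc τ t ≤ 1 := by
          have := Finset.single_le_sum (f := fun t => ntc τ t)
            (fun _ _ => Nat.zero_le _) (Finset.mem_univ t)
          rw [sum_ntc, hN] at this
          exact this
        have : ntc τ t - 1 = 0 := by omega
        rw [this]; norm_num
      have hfac2 : ∏ v : V, ∏ s : Fin d, ((γ s v).factorial : ℚ) = 1 := by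
        refine Finset.prod_eq_one fun v _ => Finset.prod_eq_one fun s _ => ?_
        rw [hγr s v]; norm_num
      rw [hfac1, hfac2, hSsing, Finset.erase_singleton]
      have hcay : ∑ A : CayOn ({ρ} : Finset (Fin d)) ρ,
          ∏ s ∈ (∅ : Finset (Fin d)), (mm τ γ s (A.1 s) : ℚ) = 1 := by
        rw [Finset.sum_congr rfl (fun A _ => Finset.prod_empty), Finset.sum_const,
          Finset.card_univ, card_cayon_singleton, one_smul]
      rw [hcay]
      norm_num
  · -- N ≥ 2
    have hcard2 : 2 ≤ Fintype.card V := by rw [hN]; exact hN2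
    obtain ⟨v0, hγ0⟩ : ∃ v0 : V, ∀ s, γ s v0 = 0 := by
      by_contra hcon
      push_neg at hcon
      have h1 : ∑ s : Fin d, ∑ t : Fin d, mm τ γ s t = N - 1 := by
        have hsum : ∑ s : Fin d, ntc τ s = N := by rw [sum_ntc, hN]
        have h2 : ∑ s : Fin d, ((if s = ρ then 1 else 0) + ∑ t : Fin d, mm τ γ s t) = N := by
          rw [show (∑ s : Fin d, ((if s = ρ then 1 else 0) + ∑ t : Fin d, mm τ γ s t))
              = ∑ s : Fin d, ntc τ s from Finset.sum_congr rfl fun s _ => (hC s).symm]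
          exact hsum
        rw [Finset.sum_add_distrib, Finset.sum_ite_eq' Finset.univ ρ (fun _ => 1),
          if_pos (Finset.mem_univ ρ)] at h2
        omega
      have h3 : ∑ s : Fin d, ∑ t : Fin d, mm τ γ s t = ∑ v : V, ∑ s : Fin d, γ s v := by
        rw [Finset.sum_congr rfl (fun s _ => sum_mm τ γ s)]
        exact Finset.sum_comm
      have h4 : ∀ v : V, 1 ≤ ∑ s : Fin d, γ s v := by
        intro v
        obtain ⟨s, hs⟩ := hcon v
        calc (1 : ℕ) ≤ γ s v := Nat.one_le_iff_ne_zero.2 hs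
        _ ≤ _ := Finset.single_le_sum (f := fun s => γ s v)
          (fun _ _ => Nat.zero_le _) (Finset.mem_univ s)
      have h5 : Fintype.card V ≤ ∑ v : V, ∑ s : Fin d, γ s v := by
        calc Fintype.card V = ∑ _v : V, 1 := by
              rw [Finset.sum_const, Finset.card_univ, smul_eq_mul, mul_one]
        _ ≤ _ := Finset.sum_le_sum fun v _ => h4 v
      rw [hN] at h5
      omega
    have hs0pos : 0 < ntc τ (τ v0) := by
      have h := Finset.single_le_sum (f := fun v : V => if τ v = τ v0 then 1 else 0)
        (fun _ _ => Nat.zero_le _) (Finset.mem_univ v0)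
      rw [if_pos rfl] at h
      exact lt_of_lt_of_le Nat.zero_lt_one h
    have hs0S : τ v0 ∈ S := (hS _).2 hs0pos
    have hcard' : Fintype.card {v : V // v ≠ v0} = N - 1 := by
      have h := Fintype.card_subtype_compl (p := fun v : V => v = v0)
      rw [Fintype.card_subtype_eq, hN] at h
      exact h
    have huniq : ntc τ (τ v0) = 1 → ∀ v, τ v = τ v0 → v = v0 := by
      intro h1 v hv
      by_contra hne
      have h2 : 2 ≤ ntc τ (τ v0) := by
        have hsub : ({v0, v} : Finset V) ⊆ Finset.univ := Finset.subset_univ _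
        have := Finset.sum_le_sum_of_subset
          (f := fun v : V => if τ v = τ v0 then 1 else 0) hsub
        rw [Finset.sum_pair (fun hc => hne hc.symm), if_pos rfl, if_pos hv] at this
        exact this
      omega
    by_cases hB1 : τ v0 = ρ ∧ ntc τ (τ v0) = 1
    · -- the unique type-ρ vertex is a prescribed leaf : no trees, zero sum
      haveI : IsEmpty (Good τ ρ γ) := by
        refine ⟨fun T => ?_⟩
        have hroot : T.1.1 = v0 := huniq hB1.2 T.1.1 (by rw [T.2.2.1, ← hB1.1])
        exact root_ne hcard2 hγ0 T hroot
      rw [Nat.card_of_isEmpty]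
      obtain ⟨s1, hs1ρ, hs1pos⟩ : ∃ t, t ≠ ρ ∧ 0 < ntc τ t := by
        by_contra hcon
        push_neg at hcon
        have hz : ∑ t ∈ Finset.univ.erase ρ, ntc τ t = 0 :=
          Finset.sum_eq_zero fun t ht => by
            have := hcon t (Finset.mem_erase.1 ht).1; omega
        have h6 : ∑ t : Fin d, ntc τ t = N := by rw [sum_ntc, hN]
        rw [← Finset.add_sum_erase _ _ (Finset.mem_univ ρ), hz] at h6
        have h7 : ntc τ ρ = 1 := by rw [← hB1.1]; exact hB1.2
        omega
      have hcolρ : ∀ s, mm τ γ s ρ = 0 := by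
        intro s
        refine Finset.sum_eq_zero fun v _ => ?_
        by_cases hc : τ v = ρ
        · rw [if_pos hc, huniq hB1.2 v (hc.trans hB1.1.symm), hγ0]
        · rw [if_neg hc]
      have hzero := G_zero S ρ ((hS s1).2 hs1pos) hs1ρ (mm τ γ) hcolρ
      have hgq : ∑ A : CayOn S ρ, ∏ s ∈ S.erase ρ, (mm τ γ s (A.1 s) : ℚ) = 0 := by
        have hc2 : ((∑ A : CayOn S ρ, ∏ s ∈ S.erase ρ, mm τ γ s (A.1 s) : ℕ) : ℚ) = 0 := by
          rw [hzero]; norm_num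
        rw [← hc2]; push_cast; ring
      rw [hgq]
      norm_num
    · -- deletion of the leaf v0
      obtain ⟨S', hS'eq⟩ : ∃ S'', S'' = (if ntc τ (τ v0) = 1 then S.erase (τ v0) else S) :=
        ⟨_, rfl⟩
      have hS'inv : ∀ t, t ∈ S'
          ↔ 0 < ntc (fun v : {v : V // v ≠ v0} => τ v.1) t := by
        intro t
        rw [hS'eq]
        have hd := ntc_del τ v0 t
        by_cases h1 : ntc τ (τ v0) = 1
        · rw [if_pos h1, Finset.mem_erase]
          constructor
          · rintro ⟨hne, htS⟩
            have hpos := (hS t).1 htS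
            rw [if_neg (fun hc => hne hc.symm), add_zero] at hd
            omega
          · intro hpos
            refine ⟨?_, (hS t).2 (by omega)⟩
            intro hc
            rw [← hc] at h1 hd
            rw [if_pos rfl] at hd
            omega
        · rw [if_neg h1, hS t]
          by_cases hc : τ v0 = t
          · rw [if_pos hc] at hd
            have h2 : 2 ≤ ntc τ (τ v0) := by omega
            rw [hc] at h2
            omega
          · rw [if_neg hc, add_zero] at hd
            omega
      have hC' : ∀ (w : {v : V // v ≠ v0}), 0 < γ (τ v0) w.1 → ∀ s,
          ntc (fun v : {v : V // v ≠ v0} => τ v.1) s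
            = (if s = ρ then 1 else 0) + ∑ t : Fin d,
                mm (fun v : {v : V // v ≠ v0} => τ v.1)
                  (fun a v => if a = τ v0 ∧ v.1 = w.1 then γ a v.1 - 1 else γ a v.1) s t := by
        intro w hw s
        
        have hd := ntc_del τ v0 s
        have hsum : ∑ t : Fin d, mm τ γ s t
            = (∑ t : Fin d, mm (fun v : {v : V // v ≠ v0} => τ v.1)
                (fun a v => if a = τ v0 ∧ v.1 = w.1 then γ a v.1 - 1 else γ a v.1) s t)
              + (if s = τ v0 then 1 else 0) := by
          rw [Finset.sum_congr rfl (fun t _ => mm_del τ γ v0 hγ0 w hw s t),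
            Finset.sum_add_distrib]
          congr 1
          by_cases hc : s = τ v0
          · rw [if_pos hc]
            rw [Finset.sum_congr rfl (fun t _ =>
              ite_one_congr (show (s = τ v0 ∧ t = τ w.1) ↔ t = τ w.1 from
                ⟨fun h => h.2, fun h => ⟨hc, h⟩⟩))]
            rw [Finset.sum_ite_eq' Finset.univ (τ w.1) (fun _ => 1),
              if_pos (Finset.mem_univ _)]
          · rw [if_neg hc]
            exact Finset.sum_eq_zero fun t _ => if_neg (fun h => hc h.1)
        have hCs := hC s
        rw [hd, hsum] at hCs
        have hco : (if τ v0 = s then 1 else 0 : ℕ) = (if s = τ v0 then 1 else 0) :=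
          ite_one_congr eq_comm
        omega
      -- per-fiber counting
      have hper : ∀ w : {v : V // v ≠ v0},
          (Nat.card {T : Good τ ρ γ // T.1.2 v0 = w.1} : ℚ)
            = (γ (τ v0) w.1 : ℚ) *
              ((∏ t : Fin d, ((ntc (fun v : {v : V // v ≠ v0} => τ v.1) t - 1).factorial : ℚ)) /
                (∏ v : V, ∏ s : Fin d, ((γ s v).factorial : ℚ))) *
              ∑ A : CayOn S' ρ,
                ∏ s ∈ S'.erase ρ,
                  ((mm τ γ s (A.1 s) - if s = τ v0 ∧ A.1 s = τ w.1 then 1 else 0 : ℕ) : ℚ) := by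
        intro w
        by_cases hw : 0 < γ (τ v0) w.1
        · -- the parent gets one child of type τ v0
          rw [card_del τ ρ γ v0 hγ0 hcard2 w hw]
          rw [IH (N-1) (by omega) {v : V // v ≠ v0} hcard' (fun v => τ v.1)
            (fun a v => if a = τ v0 ∧ v.1 = w.1 then γ a v.1 - 1 else γ a v.1)
            S' hS'inv (hC' w hw)]
          -- (a) rewrite the matrix entries
          have hmmeq : ∀ s t, mm (fun v : {v : V // v ≠ v0} => τ v.1)
              (fun a v => if a = τ v0 ∧ v.1 = w.1 then γ a v.1 - 1 else γ a v.1) s t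
              = mm τ γ s t - (if s = τ v0 ∧ t = τ w.1 then 1 else 0) := by
            intro s t
            have := mm_del τ γ v0 hγ0 w hw s t
            omega
          have hsum_rw : ∑ A : CayOn S' ρ,
              ∏ s ∈ S'.erase ρ,
                ((mm (fun v : {v : V // v ≠ v0} => τ v.1)
                  (fun a v => if a = τ v0 ∧ v.1 = w.1 then γ a v.1 - 1 else γ a v.1) s (A.1 s) : ℕ) : ℚ)
              = ∑ A : CayOn S' ρ,
                ∏ s ∈ S'.erase ρ,
                  ((mm τ γ s (A.1 s) - if s = τ v0 ∧ A.1 s = τ w.1 then 1 else 0 : ℕ) : ℚ) := by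
            refine Finset.sum_congr rfl fun A _ => Finset.prod_congr rfl fun s _ => ?_
            rw [hmmeq s (A.1 s)]
          rw [hsum_rw]
          -- (b) factorial bookkeeping
          have hfacN : (∏ v : {v : V // v ≠ v0}, ∏ s : Fin d,
                ((if s = τ v0 ∧ v.1 = w.1 then γ s v.1 - 1 else γ s v.1).factorial))
                * γ (τ v0) w.1
              = ∏ v : V, ∏ s : Fin d, (γ s v).factorial := by
            rw [split_v0_prod v0 (fun v => ∏ s : Fin d, (γ s v).factorial)]
            have h0 : ∏ s : Fin d, (γ s v0).factorial = 1 :=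
              Finset.prod_eq_one fun s _ => by rw [hγ0]; rfl
            rw [h0, one_mul]
            rw [← Finset.mul_prod_erase Finset.univ
              (fun v : {v : V // v ≠ v0} => ∏ s : Fin d,
                ((if s = τ v0 ∧ v.1 = w.1 then γ s v.1 - 1 else γ s v.1).factorial))
              (Finset.mem_univ w)]
            rw [← Finset.mul_prod_erase Finset.univ
              (fun v : {v : V // v ≠ v0} => ∏ s : Fin d, ((γ s v.1).factorial))
              (Finset.mem_univ w)]
            have hoff : ∏ v ∈ Finset.univ.erase w, (∏ s : Fin d,
                ((if s = τ v0 ∧ v.1 = w.1 then γ s v.1 - 1 else γ s v.1).factorial))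
                = ∏ v ∈ Finset.univ.erase w, ∏ s : Fin d, ((γ s v.1).factorial) := by
              refine Finset.prod_congr rfl fun v hv => Finset.prod_congr rfl fun s _ => ?_
              rw [if_neg (fun hc => (Finset.mem_erase.1 hv).1 (Subtype.ext hc.2))]
            rw [hoff]
            rw [mul_right_comm]
            congr 1
            -- (∏_s (γ' s w)!) * γ (τ v0) w = ∏_s (γ s w)!
            rw [← Finset.mul_prod_erase Finset.univ
              (fun s : Fin d => ((if s = τ v0 ∧ w.1 = w.1 then γ s w.1 - 1 else γ s w.1).factorial))
              (Finset.mem_univ (τ v0))]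
            rw [← Finset.mul_prod_erase Finset.univ
              (fun s : Fin d => ((γ s w.1).factorial)) (Finset.mem_univ (τ v0))]
            have hoff2 : ∏ s ∈ Finset.univ.erase (τ v0),
                ((if s = τ v0 ∧ w.1 = w.1 then γ s w.1 - 1 else γ s w.1).factorial)
                = ∏ s ∈ Finset.univ.erase (τ v0), ((γ s w.1).factorial) := by
              refine Finset.prod_congr rfl fun s hs => ?_
              rw [if_neg (fun hc => (Finset.mem_erase.1 hs).1 hc.1)]
            rw [hoff2, if_pos ⟨rfl, rfl⟩]
            rw [mul_right_comm, mul_comm ((γ (τ v0) w.1 - 1).factorial) (γ (τ v0) w.1),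
              Nat.mul_factorial_pred hw.ne']
          -- put together
          have hQ : ((∏ v : {v : V // v ≠ v0}, ∏ s : Fin d,
                (((if s = τ v0 ∧ v.1 = w.1 then γ s v.1 - 1 else γ s v.1).factorial : ℕ) : ℚ)))
                * (γ (τ v0) w.1 : ℚ)
              = ∏ v : V, ∏ s : Fin d, ((γ s v).factorial : ℚ) := by
            have := congrArg (fun n : ℕ => (n : ℚ)) hfacN
            push_cast at this
            convert this using 2
          have hQ' : (∏ v : {v : V // v ≠ v0}, ∏ s : Fin d,
                (((if s = τ v0 ∧ v.1 = w.1 then γ s v.1 - 1 else γ s v.1).factorial : ℕ) : ℚ)) ≠ 0 := by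
            refine Finset.prod_ne_zero_iff.2 fun v _ => Finset.prod_ne_zero_iff.2 fun s _ => ?_
            exact_mod_cast (Nat.factorial_pos _).ne'
          have hγq : (γ (τ v0) w.1 : ℚ) ≠ 0 := by
            exact_mod_cast Nat.pos_iff_ne_zero.1 hw
          rw [← hQ]
          field_simp
        · -- no possible parent here
          have hwz : γ (τ v0) w.1 = 0 := by omega
          haveI : IsEmpty {T : Good τ ρ γ // T.1.2 v0 = w.1} := by
            refine ⟨fun T => ?_⟩
            have h1 : chF τ T.1.1.1 T.1.1.2 (τ v0) w.1 = γ (τ v0) w.1 := T.1.2.2.2 (τ v0) w.1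
            have h2 : (1:ℕ) ≤ chF τ T.1.1.1 T.1.1.2 (τ v0) w.1 := by
              refine le_trans ?_ (Finset.single_le_sum
                (f := fun v => if τ v = τ v0 ∧ v ≠ T.1.1.1 ∧ T.1.1.2 v = w.1 then 1 else 0)
                (fun _ _ => Nat.zero_le _) (Finset.mem_univ v0))
              rw [if_pos ⟨rfl, Ne.symm (root_ne hcard2 hγ0 T.1), T.2⟩]
            omega
          rw [Nat.card_of_isEmpty, hwz]
          norm_num
      -- decompose the count according to the parent of v0
      have hdecomp : (Nat.card (Good τ ρ γ) : ℚ)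
          = ∑ w : {v : V // v ≠ v0}, (Nat.card {T : Good τ ρ γ // T.1.2 v0 = w.1} : ℚ) := by
        have hfun : ∀ T : Good τ ρ γ, T.1.2 v0 ≠ v0 := fun T => no_child hcard2 hγ0 T v0
        have he : Good τ ρ γ ≃ Σ w : {v : V // v ≠ v0}, {T : Good τ ρ γ // T.1.2 v0 = w.1} := by
          refine Equiv.trans (Equiv.sigmaFiberEquiv
            (fun T : Good τ ρ γ => (⟨T.1.2 v0, hfun T⟩ : {v : V // v ≠ v0}))).symm ?_
          refine Equiv.sigmaCongrRight fun w => Equiv.subtypeEquivRight fun T => ?_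
          exact Subtype.ext_iff
        rw [Nat.card_congr he, Nat.card_eq_fintype_card, Fintype.card_sigma]
        push_cast
        exact Finset.sum_congr rfl fun w _ => by rw [Nat.card_eq_fintype_card]
      rw [hdecomp, Finset.sum_congr rfl (fun w _ => hper w)]
      -- pull the constant factor out
      rw [show ∑ w : {v : V // v ≠ v0}, ((γ (τ v0) w.1 : ℚ) *
            ((∏ t : Fin d, ((ntc (fun v : {v : V // v ≠ v0} => τ v.1) t - 1).factorial : ℚ)) /
              (∏ v : V, ∏ s : Fin d, ((γ s v).factorial : ℚ))) *
            ∑ A : CayOn S' ρ, ∏ s ∈ S'.erase ρ,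
              ((mm τ γ s (A.1 s) - if s = τ v0 ∧ A.1 s = τ w.1 then 1 else 0 : ℕ) : ℚ))
          = ((∏ t : Fin d, ((ntc (fun v : {v : V // v ≠ v0} => τ v.1) t - 1).factorial : ℚ)) /
              (∏ v : V, ∏ s : Fin d, ((γ s v).factorial : ℚ))) *
            ∑ w : {v : V // v ≠ v0}, (γ (τ v0) w.1 : ℚ) *
              ∑ A : CayOn S' ρ, ∏ s ∈ S'.erase ρ,
                ((mm τ γ s (A.1 s) - if s = τ v0 ∧ A.1 s = τ w.1 then 1 else 0 : ℕ) : ℚ) from by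
        rw [Finset.mul_sum]
        exact Finset.sum_congr rfl fun w _ => by ring]
      -- group the parents by type
      have hgroup : ∑ w : {v : V // v ≠ v0}, (γ (τ v0) w.1 : ℚ) *
            (∑ A : CayOn S' ρ, ∏ s ∈ S'.erase ρ,
              ((mm τ γ s (A.1 s) - if s = τ v0 ∧ A.1 s = τ w.1 then 1 else 0 : ℕ) : ℚ))
          = ∑ u : Fin d, (mm τ γ (τ v0) u : ℚ) *
            (∑ A : CayOn S' ρ, ∏ s ∈ S'.erase ρ,
              ((mm τ γ s (A.1 s) - if s = τ v0 ∧ A.1 s = u then 1 else 0 : ℕ) : ℚ)) := by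
        have h2 : ∑ w : {v : V // v ≠ v0}, (γ (τ v0) w.1 : ℚ) *
              (∑ A : CayOn S' ρ, ∏ s ∈ S'.erase ρ,
                ((mm τ γ s (A.1 s) - if s = τ v0 ∧ A.1 s = τ w.1 then 1 else 0 : ℕ) : ℚ))
            = ∑ v : V, (γ (τ v0) v : ℚ) *
              (∑ A : CayOn S' ρ, ∏ s ∈ S'.erase ρ,
                ((mm τ γ s (A.1 s) - if s = τ v0 ∧ A.1 s = τ v then 1 else 0 : ℕ) : ℚ)) := by
          rw [split_v0 v0 (fun v : V => (γ (τ v0) v : ℚ) *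
            (∑ A : CayOn S' ρ, ∏ s ∈ S'.erase ρ,
              ((mm τ γ s (A.1 s) - if s = τ v0 ∧ A.1 s = τ v then 1 else 0 : ℕ) : ℚ)))]
          rw [hγ0 (τ v0), Nat.cast_zero, zero_mul, zero_add]
        rw [h2]
        rw [← Finset.sum_fiberwise_of_maps_to (g := τ) (fun v _ => Finset.mem_univ (τ v))
          (fun v : V => (γ (τ v0) v : ℚ) *
            (∑ A : CayOn S' ρ, ∏ s ∈ S'.erase ρ,
              ((mm τ γ s (A.1 s) - if s = τ v0 ∧ A.1 s = τ v then 1 else 0 : ℕ) : ℚ)))]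
        refine Finset.sum_congr rfl fun u _ => ?_
        have h3 : ∀ v ∈ Finset.univ.filter (fun v : V => τ v = u),
            (γ (τ v0) v : ℚ) *
              (∑ A : CayOn S' ρ, ∏ s ∈ S'.erase ρ,
                ((mm τ γ s (A.1 s) - if s = τ v0 ∧ A.1 s = τ v then 1 else 0 : ℕ) : ℚ))
            = (γ (τ v0) v : ℚ) *
              (∑ A : CayOn S' ρ, ∏ s ∈ S'.erase ρ,
                ((mm τ γ s (A.1 s) - if s = τ v0 ∧ A.1 s = u then 1 else 0 : ℕ) : ℚ)) := by
          intro v hv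
          rw [(Finset.mem_filter.1 hv).2]
        rw [Finset.sum_congr rfl h3, ← Finset.sum_mul]
        congr 1
        have h4 : mm τ γ (τ v0) u = ∑ v ∈ Finset.univ.filter (fun v : V => τ v = u), γ (τ v0) v :=
          (Finset.sum_filter _ _).symm
        rw [h4]
        push_cast
        rfl
      rw [hgroup]
      -- now split according to whether the type of v0 dies
      by_cases hns : ntc τ (τ v0) = 1
      · -- the type of v0 disappears
        have hs0ρ : τ v0 ≠ ρ := fun hc => hB1 ⟨hc, hns⟩
        have hS'e : S' = S.erase (τ v0) := by rw [hS'eq, if_pos hns]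
        have hcol : ∀ s, mm τ γ s (τ v0) = 0 := by
          intro s
          refine Finset.sum_eq_zero fun v _ => ?_
          by_cases hc : τ v = τ v0
          · rw [if_pos hc, huniq hns v hc, hγ0]
          · rw [if_neg hc]
        have hrow : ∑ t : Fin d, mm τ γ (τ v0) t = 1 := by
          have hh := hC (τ v0)
          rw [hns, if_neg hs0ρ] at hh
          omega
        have hsupp : ∀ t, mm τ γ (τ v0) t ≠ 0 → t ∈ S := by
          intro t hmt
          refine (hS t).2 ?_
          obtain ⟨v, _, hv⟩ := Finset.exists_ne_zero_of_sum_ne_zero hmt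
          by_cases hc : τ v = t
          · have h5 := Finset.single_le_sum (f := fun v : V => if τ v = t then 1 else 0)
              (fun _ _ => Nat.zero_le _) (Finset.mem_univ v)
            rw [if_pos hc] at h5
            exact lt_of_lt_of_le Nat.zero_lt_one h5
          · rw [if_neg hc] at hv; exact absurd rfl hv
        have hGG := identity_erase S ρ (τ v0) hρS hs0S hs0ρ (mm τ γ) hcol hrow
          (fun t ht => hsupp t ht)
        -- the inner sums don't depend on u, and equal the CayOn S sum
        have hHu : ∀ u : Fin d, ∑ A : CayOn S' ρ, ∏ s ∈ S'.erase ρ,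
              ((mm τ γ s (A.1 s) - if s = τ v0 ∧ A.1 s = u then 1 else 0 : ℕ) : ℚ)
            = ∑ A : CayOn S ρ, ∏ s ∈ S.erase ρ, (mm τ γ s (A.1 s) : ℚ) := by
          intro u
          rw [hS'e]
          have h6 : ∑ A : CayOn (S.erase (τ v0)) ρ, ∏ s ∈ (S.erase (τ v0)).erase ρ,
                ((mm τ γ s (A.1 s) - if s = τ v0 ∧ A.1 s = u then 1 else 0 : ℕ) : ℚ)
              = ∑ A : CayOn (S.erase (τ v0)) ρ, ∏ s ∈ (S.erase (τ v0)).erase ρ,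
                (mm τ γ s (A.1 s) : ℚ) := by
            refine Finset.sum_congr rfl fun A _ => Finset.prod_congr rfl fun s hs => ?_
            have hss0 : s ≠ τ v0 := (Finset.mem_erase.1 (Finset.mem_erase.1 hs).2).1
            rw [if_neg (fun hc => hss0 hc.1), Nat.sub_zero]
          rw [h6]
          have h7 : ((∑ A : CayOn (S.erase (τ v0)) ρ, ∏ s ∈ (S.erase (τ v0)).erase ρ,
              mm τ γ s (A.1 s) : ℕ) : ℚ)
              = ((∑ A : CayOn S ρ, ∏ s ∈ S.erase ρ, mm τ γ s (A.1 s) : ℕ) : ℚ) := by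
            rw [hGG]
          push_cast at h7
          exact h7
        rw [Finset.sum_congr rfl (fun u _ => by rw [hHu u]), ← Finset.sum_mul]
        have hrowQ : (∑ u : Fin d, (mm τ γ (τ v0) u : ℚ)) = 1 := by
          have : ((∑ t : Fin d, mm τ γ (τ v0) t : ℕ) : ℚ) = 1 := by rw [hrow]; norm_num
          push_cast at this
          exact this
        rw [hrowQ, one_mul]
        -- finally the factorial products coincide
        have hfac : ∏ t : Fin d, ((ntc (fun v : {v : V // v ≠ v0} => τ v.1) t - 1).factorial : ℚ)
            = ∏ t : Fin d, ((ntc τ t - 1).factorial : ℚ) := by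
          refine Finset.prod_congr rfl fun t _ => ?_
          have hd := ntc_del τ v0 t
          by_cases hc : τ v0 = t
          · rw [if_pos hc] at hd
            rw [← hc] at hd ⊢
            have h8 : ntc (fun v : {v : V // v ≠ v0} => τ v.1) (τ v0) = 0 := by omega
            rw [h8, hns]
          · rw [if_neg hc, add_zero] at hd
            rw [hd]
        rw [hfac]
      · -- the type of v0 survives
        have hns2 : 2 ≤ ntc τ (τ v0) := by omega
        have hS'e : S' = S := by rw [hS'eq, if_neg hns]
        rw [hS'e]
        have hId := identity_main S ρ (τ v0) hs0S (mm τ γ)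
        rw [hId]
        -- the coefficient
        have hcoef : ((∑ u : Fin d, (mm τ γ (τ v0) u : ℚ)) - if τ v0 = ρ then 0 else 1)
            = (ntc τ (τ v0) : ℚ) - 1 := by
          have hh := hC (τ v0)
          have hhq : (ntc τ (τ v0) : ℚ)
              = (if τ v0 = ρ then 1 else 0) + ∑ u : Fin d, (mm τ γ (τ v0) u : ℚ) := by
            rw [show ((if τ v0 = ρ then 1 else 0 : ℚ)) = ((if τ v0 = ρ then 1 else 0 : ℕ) : ℚ) from
              (by by_cases hc : τ v0 = ρ <;> simp [hc])]
            push_cast [hh]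
            push_cast
            ring
          by_cases hc : τ v0 = ρ
          · rw [if_pos hc]
            rw [if_pos hc] at hhq
            rw [hhq]; ring
          · rw [if_neg hc]
            rw [if_neg hc] at hhq
            rw [hhq]; ring
        rw [hcoef]
        -- absorb the factor into the factorial product
        have hfac2 : ((ntc τ (τ v0) : ℚ) - 1) *
              ∏ t : Fin d, ((ntc (fun v : {v : V // v ≠ v0} => τ v.1) t - 1).factorial : ℚ)
            = ∏ t : Fin d, ((ntc τ t - 1).factorial : ℚ) := by
          rw [← Finset.mul_prod_erase Finset.univ
            (fun t => ((ntc (fun v : {v : V // v ≠ v0} => τ v.1) t - 1).factorial : ℚ))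
            (Finset.mem_univ (τ v0))]
          rw [← Finset.mul_prod_erase Finset.univ
            (fun t => ((ntc τ t - 1).factorial : ℚ)) (Finset.mem_univ (τ v0))]
          have hoff : ∏ t ∈ Finset.univ.erase (τ v0),
                ((ntc (fun v : {v : V // v ≠ v0} => τ v.1) t - 1).factorial : ℚ)
              = ∏ t ∈ Finset.univ.erase (τ v0), ((ntc τ t - 1).factorial : ℚ) := by
            refine Finset.prod_congr rfl fun t ht => ?_
            have hd := ntc_del τ v0 t
            rw [if_neg (fun hc => (Finset.mem_erase.1 ht).1 hc.symm), add_zero] at hd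
            rw [hd]
          rw [hoff, ← mul_assoc]
          congr 1
          -- (ntc - 1) * (ntc' - 1)! = (ntc - 1)!
          have hd := ntc_del τ v0 (τ v0)
          rw [if_pos rfl] at hd
          have h9 : ntc (fun v : {v : V // v ≠ v0} => τ v.1) (τ v0) - 1 = ntc τ (τ v0) - 2 := by
            omega
          rw [h9]
          have h10 : (ntc τ (τ v0) - 1) * (ntc τ (τ v0) - 2).factorial
              = (ntc τ (τ v0) - 1).factorial := by
            have := Nat.mul_factorial_pred (n := ntc τ (τ v0) - 1) (by omega)
            rw [show ntc τ (τ v0) - 1 - 1 = ntc τ (τ v0) - 2 by omega] at this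
            exact this
          have h11 : ((ntc τ (τ v0) : ℚ) - 1) = ((ntc τ (τ v0) - 1 : ℕ) : ℚ) := by
            rw [Nat.cast_sub (by omega)]
            norm_num
          rw [h11, ← Nat.cast_mul, h10]
        rw [← hfac2]
        ring

end Master

end MCT

section Glue

open Finset

variable {d : ℕ} {n : Fin d → ℕ}

lemma vtx_card_sub (P : Vtx d n → Prop) :
    Nat.card {v // P v} = ∑ v : Vtx d n, if P v then 1 else 0 := by
  rw [Nat.card_eq_fintype_card, Fintype.card_subtype, Finset.card_filter]

lemma ch_eq (T : MTree d n) (a : Fin d) (b : Vtx d n) :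
    T.ch a b = MCT.chF (Sigma.fst) T.1.1 T.1.2 a b := by
  rw [MTree.ch, vtx_card_sub]
  refine Finset.sum_congr rfl fun v _ => ?_
  by_cases h : v.1 = a ∧ v ≠ T.root ∧ T.parent v = b
  · rw [if_pos h]
    exact (if_pos h).symm
  · rw [if_neg h]
    exact (if_neg h).symm

lemma ntc_fst (t : Fin d) : MCT.ntc (Sigma.fst : Vtx d n → Fin d) t = n t := by
  unfold MCT.ntc
  rw [← Finset.univ_sigma_univ, Finset.sum_sigma]
  have h1 : ∀ t' : Fin d, (∑ i : Fin (n t'),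
      if (⟨t', i⟩ : Vtx d n).1 = t then 1 else 0) = if t' = t then n t' else 0 := by
    intro t'
    by_cases hc : t' = t
    · rw [if_pos hc, Finset.sum_congr rfl (fun i _ => if_pos hc), Finset.sum_const,
        Finset.card_univ, Fintype.card_fin, smul_eq_mul, mul_one]
    · rw [if_neg hc, Finset.sum_congr rfl (fun i _ => if_neg hc), Finset.sum_const, smul_zero]
  rw [Finset.sum_congr rfl (fun t' _ => h1 t'),
    Finset.sum_ite_eq' Finset.univ t (fun t' => n t'), if_pos (Finset.mem_univ t)]

lemma mm_fst (γ : Fin d → Vtx d n → ℕ) (s t : Fin d) :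
    MCT.mm (Sigma.fst : Vtx d n → Fin d) γ s t = ∑ i : Fin (n t), γ s ⟨t, i⟩ := by
  unfold MCT.mm
  rw [← Finset.univ_sigma_univ, Finset.sum_sigma]
  have h1 : ∀ t' : Fin d, (∑ i : Fin (n t'),
      if (⟨t', i⟩ : Vtx d n).1 = t then γ s ⟨t', i⟩ else 0)
      = if t' = t then ∑ i : Fin (n t'), γ s ⟨t', i⟩ else 0 := by
    intro t'
    by_cases hc : t' = t
    · rw [if_pos hc, Finset.sum_congr rfl (fun i _ => if_pos hc)]
    · rw [if_neg hc, Finset.sum_congr rfl (fun i _ => if_neg hc), Finset.sum_const, smul_zero]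
  rw [Finset.sum_congr rfl (fun t' _ => h1 t'),
    Finset.sum_ite_eq' Finset.univ t (fun t' => ∑ i : Fin (n t'), γ s ⟨t', i⟩),
    if_pos (Finset.mem_univ t)]

end Glue

/-- **Trees with a prescribed indegree vector (Proposition 12).**
Let `m_{s,t} = Σ_i γ_{s,t,i}`. If `n_s = δ_{s,ρ} + Σ_t m_{s,t}` for all `s`, then
`|T_{ρ,γ}| = (∏_t (n_t−1)! / ∏_{s,t,i} γ_{s,t,i}!) · Σ_{A ∈ Cay_d^ρ} ∏_{(s,t)∈A} m_{s,t}`;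
otherwise `|T_{ρ,γ}| = 0`. -/
theorem multitype_cayley_count_by_indegree (d : ℕ) (n : Fin d → ℕ)
    (hn : ∀ t, 0 < n t) (ρ : Fin d) (γ : Fin d → Vtx d n → ℕ)
    (m : Fin d → Fin d → ℕ) (hm : ∀ s t, m s t = ∑ i : Fin (n t), γ s ⟨t, i⟩) :
    (Nat.card {T : MTree d n // T.root.1 = ρ ∧ ∀ a b, T.ch a b = γ a b} : ℚ)
      =
    if ∀ s, n s = (if s = ρ then 1 else 0) + ∑ t, m s t then
      ((∏ t : Fin d, (Nat.factorial (n t - 1) : ℚ)) /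
          ∏ s : Fin d, ∏ t : Fin d, ∏ i : Fin (n t),
            (Nat.factorial (γ s ⟨t, i⟩) : ℚ)) *
        ∑ A : Cay d ρ, ∏ s ∈ Finset.univ.erase ρ, (m s (A.1 s) : ℚ)
    else 0 := by
  classical
  have hntc : ∀ t, MCT.ntc (Sigma.fst : Vtx d n → Fin d) t = n t := ntc_fst
  have hmm : ∀ s t, MCT.mm (Sigma.fst : Vtx d n → Fin d) γ s t = m s t := by
    intro s t
    rw [mm_fst, hm]
  -- the equivalence with our `Good` type
  have e : {T : MTree d n // T.root.1 = ρ ∧ ∀ a b, T.ch a b = γ a b}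
      ≃ MCT.Good (Sigma.fst : Vtx d n → Fin d) ρ γ := by
    refine ⟨fun T => ⟨T.1.1, T.1.2, T.2.1, fun a b => ?_⟩,
      fun g => ⟨⟨g.1, g.2.1⟩, g.2.2.1, fun a b => ?_⟩,
      fun T => Subtype.ext (Subtype.ext rfl), fun g => Subtype.ext rfl⟩
    · rw [← ch_eq T.1 a b]; exact T.2.2 a b
    · rw [ch_eq (⟨g.1, g.2.1⟩ : MTree d n) a b]; exact g.2.2.2 a b
  by_cases hcond : ∀ s, n s = (if s = ρ then 1 else 0) + ∑ t, m s t
  · rw [if_pos hcond, Nat.card_congr e]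
    have hSuniv : ∀ t, t ∈ (Finset.univ : Finset (Fin d))
        ↔ 0 < MCT.ntc (Sigma.fst : Vtx d n → Fin d) t :=
      fun t => ⟨fun _ => by rw [hntc]; exact hn t, fun _ => Finset.mem_univ t⟩
    have hCm : ∀ s, MCT.ntc (Sigma.fst : Vtx d n → Fin d) s
        = (if s = ρ then 1 else 0) + ∑ t : Fin d, MCT.mm (Sigma.fst : Vtx d n → Fin d) γ s t := by
      intro s
      rw [hntc, hcond s]
      congr 1
      exact Finset.sum_congr rfl fun t _ => (hmm s t).symm
    rw [MCT.master ρ (Fintype.card (Vtx d n)) (Vtx d n) rfl Sigma.fst γ Finset.univ hSuniv hCm]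
    have h1 : ∏ t : Fin d, ((MCT.ntc (Sigma.fst : Vtx d n → Fin d) t - 1).factorial : ℚ)
        = ∏ t : Fin d, ((n t - 1).factorial : ℚ) :=
      Finset.prod_congr rfl fun t _ => by rw [hntc]
    have h2 : ∏ v : Vtx d n, ∏ s : Fin d, ((γ s v).factorial : ℚ)
        = ∏ s : Fin d, ∏ t : Fin d, ∏ i : Fin (n t), ((γ s ⟨t, i⟩).factorial : ℚ) := by
      rw [Finset.prod_comm]
      refine Finset.prod_congr rfl fun s _ => ?_
      rw [← Finset.univ_sigma_univ, Finset.prod_sigma]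
    have h3 : ∑ A : MCT.CayOn (Finset.univ : Finset (Fin d)) ρ,
          ∏ s ∈ Finset.univ.erase ρ,
            (MCT.mm (Sigma.fst : Vtx d n → Fin d) γ s (A.1 s) : ℚ)
        = ∑ A : Cay d ρ, ∏ s ∈ Finset.univ.erase ρ, (m s (A.1 s) : ℚ) := by
      refine Fintype.sum_equiv
        (⟨fun f => ⟨f.1, f.2.2.1, fun v => (f.2.2.2 v (Finset.mem_univ v)).2⟩,
          fun f => ⟨f.1, fun s hs => absurd (Finset.mem_univ s) hs, f.2.1,
            fun s _ => ⟨Finset.mem_univ _, f.2.2 s⟩⟩,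
          fun f => Subtype.ext rfl, fun f => Subtype.ext rfl⟩ :
            MCT.CayOn (Finset.univ : Finset (Fin d)) ρ ≃ Cay d ρ) _ _ fun A => ?_
      refine Finset.prod_congr rfl fun s _ => ?_
      rw [hmm]
      rfl
    rw [h1, h2, h3]
  · rw [if_neg hcond]
    haveI : IsEmpty {T : MTree d n // T.root.1 = ρ ∧ ∀ a b, T.ch a b = γ a b} := by
      refine ⟨fun T => hcond fun s => ?_⟩
      have hdc := MCT.degree_cond (e T) s
      rw [hntc] at hdc
      rw [hdc]
      congr 1
      exact Finset.sum_congr rfl fun t _ => hmm s t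
    rw [Nat.card_of_isEmpty]
    norm_num
end

section
/- Fix d ≥ 1. Let G' be the directed graph with vertex set V' = {(s,t) ∈ [d]×[d+1] : t ≤ s+1} and edge set E' = {((s,t),(t,u)) : (s,t) ∈ V', (t,u) ∈ V'}; write e_{s,t,u} for the edge ((s,t),(t,u)). Let A ⊆ E' be a set of edges containing exactly one edge going out of each vertex (s,t) ∈ V' with s,t ∈ [d], and containing no loop e_{s,s,s}. Then A is a spanning tree of G' oriented toward the vertex (d,d+1) if and only if for every s ∈ {2,…,d}, A contains either the edge e_{s−1,s,s+1} or both of the edges e_{s−1,s,s} and e_{s,s,s+1}. -/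
open scoped Classical

/-- **Characterization of the spanning trees of the staircase graph `G'`
(Claim 16).** Here `d = e + 1 ≥ 1`, the vertices of `G'` are the pairs
`(s,t) ∈ [d]×[d+1]` with `t ≤ s+1` (0-indexed: `(s,t) ∈ Fin (e+1) × Fin (e+2)`
with `t ≤ s+1`), its edges are the pairs `e_{s,t,u} = ((s,t),(t,u))` of vertices,
and the root is `r = (d, d+1)` (0-indexed: `(Fin.last e, Fin.last (e+1))`).
Let `A` be a set of edges of `G'` containing exactly one edge out of each vertex
`(s,t)` with `s,t ∈ [d]`, and no loop. Then `A` is a spanning tree of `G'` oriented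
toward `r` (no edge out of `r`, and every vertex reaches `r` along `A`) if and only
if for every `s ∈ {2,…,d}` (0-indexed: `s = a+1` with `a : Fin e`), `A` contains
either the edge `e_{s−1,s,s+1}` or both of the edges `e_{s−1,s,s}` and
`e_{s,s,s+1}`. -/
theorem staircase_spanning_tree_characterization (e : ℕ)
    (A : Set ((Fin (e + 1) × Fin (e + 2)) × (Fin (e + 1) × Fin (e + 2))))
    (hA : ∀ q ∈ A,
      ((q.1.2 : ℕ) ≤ (q.1.1 : ℕ) + 1) ∧ ((q.2.2 : ℕ) ≤ (q.2.1 : ℕ) + 1) ∧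
        q.1.2 = q.2.1.castSucc)
    (hout : ∀ v : Fin (e + 1) × Fin (e + 2),
      (v.2 : ℕ) ≤ (v.1 : ℕ) + 1 → v.2 ≠ Fin.last (e + 1) → ∃! w, (v, w) ∈ A)
    (hloop : ∀ v, (v, v) ∉ A) :
    ((∀ w, ((Fin.last e, Fin.last (e + 1)), w) ∉ A) ∧
      ∀ v : Fin (e + 1) × Fin (e + 2), (v.2 : ℕ) ≤ (v.1 : ℕ) + 1 →
        Relation.ReflTransGen (fun x y => (x, y) ∈ A) v
          (Fin.last e, Fin.last (e + 1)))
      ↔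
    ∀ a : Fin e,
      ((a.castSucc, a.succ.castSucc), (a.succ, a.succ.succ)) ∈ A ∨
      (((a.castSucc, a.succ.castSucc), (a.succ, a.succ.castSucc)) ∈ A ∧
        ((a.succ, a.succ.castSucc), (a.succ, a.succ.succ)) ∈ A) := by
  classical
  have hA' : ∀ x y : Fin (e + 1) × Fin (e + 2), (x, y) ∈ A →
      ((x.2 : ℕ) ≤ (x.1 : ℕ) + 1) ∧ ((y.2 : ℕ) ≤ (y.1 : ℕ) + 1) ∧
        (x.2 : ℕ) = (y.1 : ℕ) := by
    intro x y h
    obtain ⟨h1, h2, h3⟩ := hA (x, y) h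
    refine ⟨h1, h2, ?_⟩
    have h4 := congrArg Fin.val h3
    simpa using h4
  have hner : ∀ w, ((Fin.last e, Fin.last (e + 1)), w) ∉ A := by
    intro w hw
    have h4 := (hA' _ _ hw).2.2
    have h5 := w.1.isLt
    simp [Fin.val_last] at h4
    omega
  have hlast_ne : ∀ x : Fin (e + 1) × Fin (e + 2), (x.2 : ℕ) ≤ e →
      x.2 ≠ Fin.last (e + 1) := by
    intro x h hx
    rw [hx] at h
    simp [Fin.val_last] at h
  obtain ⟨f, hstepf, hforb⟩ :
      ∃ f : Fin (e + 1) × Fin (e + 2) → Fin (e + 1) × Fin (e + 2),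
        (∀ x y, (x, y) ∈ A → f x = y) ∧ (∀ x, f x = x ∨ (x, f x) ∈ A) := by
    refine ⟨fun x => if h : ∃ w, (x, w) ∈ A then h.choose else x, ?_, ?_⟩
    · intro x y hxy
      have hpos : ∃ w, (x, w) ∈ A := ⟨y, hxy⟩
      simp only [dif_pos hpos]
      have hch := hpos.choose_spec
      have h1 := hA' _ _ hxy
      have hl : x.2 ≠ Fin.last (e + 1) := by
        intro hx
        have h4 := h1.2.2
        rw [hx] at h4
        have := y.1.isLt
        simp [Fin.val_last] at h4
        omega
      obtain ⟨w, _, hu⟩ := hout x h1.1 hl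
      rw [hu _ hch, hu _ hxy]
    · intro x
      by_cases h : ∃ w, (x, w) ∈ A
      · right
        simp only [dif_pos h]
        exact h.choose_spec
      · left
        simp only [dif_neg h]
  have hfr : f (Fin.last e, Fin.last (e + 1)) = (Fin.last e, Fin.last (e + 1)) :=
    (hforb _).resolve_right (hner _)
  have hkey : ∀ x : Fin (e + 1) × Fin (e + 2), (x.2 : ℕ) ≤ (x.1 : ℕ) + 1 →
      x.2 ≠ Fin.last (e + 1) → (x, f x) ∈ A := by
    intro x h1 h2
    obtain ⟨w, hw, -⟩ := hout x h1 h2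
    rw [hstepf x w hw]
    exact hw
  have hreach_iter : ∀ (n : ℕ) (x : Fin (e + 1) × Fin (e + 2)),
      Relation.ReflTransGen (fun x y => (x, y) ∈ A) x (f^[n] x) := by
    intro n x
    induction n with
    | zero => exact .refl
    | succ n ih =>
      rw [Function.iterate_succ_apply']
      rcases hforb (f^[n] x) with h | h
      · rw [h]; exact ih
      · exact ih.tail h
  have hiter_of_reach : ∀ x y : Fin (e + 1) × Fin (e + 2),
      Relation.ReflTransGen (fun x y => (x, y) ∈ A) x y → ∃ n, f^[n] x = y := by
    intro x y h
    induction h with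
    | refl => exact ⟨0, rfl⟩
    | tail _ hbc ih =>
      obtain ⟨n, hn⟩ := ih
      exact ⟨n + 1, by rw [Function.iterate_succ_apply', hn]; exact hstepf _ _ hbc⟩
  constructor
  · rintro ⟨-, hreach⟩ a
    have hvval : ((((a.castSucc : Fin (e + 1)), (a.succ.castSucc : Fin (e + 2))) :
        Fin (e + 1) × Fin (e + 2)).2 : ℕ) ≤
        ((((a.castSucc : Fin (e + 1)), (a.succ.castSucc : Fin (e + 2))) :
        Fin (e + 1) × Fin (e + 2)).1 : ℕ) + 1 := by
      simp
    have hvlast : (a.succ.castSucc : Fin (e + 2)) ≠ Fin.last (e + 1) := by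
      apply hlast_ne ((a.castSucc : Fin (e + 1)), (a.succ.castSucc : Fin (e + 2)))
      have := a.isLt
      simp only [Fin.coe_castSucc, Fin.val_succ]
      omega
    obtain ⟨w, hw, -⟩ := hout (a.castSucc, a.succ.castSucc) hvval hvlast
    have hwA := hA' _ _ hw
    have hw1v := hwA.2.2
    simp only [Fin.coe_castSucc, Fin.val_succ] at hw1v
    have hw1 : w.1 = a.succ := by
      apply Fin.ext
      simp only [Fin.val_succ]
      omega
    have hcontra : ∀ z : Fin (e + 1) × Fin (e + 2), (z.2 : ℕ) ≤ (z.1 : ℕ) + 1 →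
        (z.1 : ℕ) ≤ (a : ℕ) →
        Relation.ReflTransGen (fun x y => (x, y) ∈ A) w z → False := by
      intro z hzval hz hwz
      have hclimb : ∀ (x y : Fin (e + 1) × Fin (e + 2)),
          Relation.ReflTransGen (fun x y => (x, y) ∈ A) x y →
          (x.1 : ℕ) ≤ (a : ℕ) → (a : ℕ) < (y.1 : ℕ) →
          Relation.ReflTransGen (fun x y => (x, y) ∈ A) x
            ((a.castSucc : Fin (e + 1)), (a.succ.castSucc : Fin (e + 2))) := by
        intro x y h
        induction h with
        | refl => intro h1 h2; omega
        | @tail b c hxb hbc ih =>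
          intro h1 h2
          by_cases hbk : (b.1 : ℕ) ≤ (a : ℕ)
          · have h3 := hA' _ _ hbc
            have h4 := h3.2.2
            have h5 := h3.1
            have hb : b = ((a.castSucc : Fin (e + 1)), (a.succ.castSucc : Fin (e + 2))) := by
              refine Prod.ext (Fin.ext ?_) (Fin.ext ?_)
              · simp only [Fin.coe_castSucc]; omega
              · simp only [Fin.coe_castSucc, Fin.val_succ]; omega
            exact hb ▸ hxb
          · exact ih h1 (by omega)
      have hrr := hreach z hzval
      have hzv := hclimb z _ hrr hz (by simp)
      obtain ⟨n1, hn1⟩ := hiter_of_reach _ _ hwz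
      obtain ⟨n2, hn2⟩ := hiter_of_reach _ _ hzv
      have hfv : f (a.castSucc, a.succ.castSucc) = w := hstepf _ _ hw
      have hm : f^[n2 + (n1 + 1)] ((a.castSucc : Fin (e + 1)), (a.succ.castSucc : Fin (e + 2)))
          = ((a.castSucc : Fin (e + 1)), (a.succ.castSucc : Fin (e + 2))) := by
        rw [Function.iterate_add_apply, Function.iterate_succ_apply, hfv, hn1, hn2]
      obtain ⟨n, hn⟩ := hiter_of_reach _ _ (hreach (a.castSucc, a.succ.castSucc) hvval)
      have hvr : (((a.castSucc : Fin (e + 1)), (a.succ.castSucc : Fin (e + 2))) :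
          Fin (e + 1) × Fin (e + 2)) = (Fin.last e, Fin.last (e + 1)) := by
        have h1 : f^[(n2 + (n1 + 1)) * n] ((a.castSucc : Fin (e + 1)), (a.succ.castSucc : Fin (e + 2)))
            = ((a.castSucc : Fin (e + 1)), (a.succ.castSucc : Fin (e + 2))) := by
          rw [Function.iterate_mul]
          exact Function.iterate_fixed hm n
        have hle : n ≤ (n2 + (n1 + 1)) * n := Nat.le_mul_of_pos_left n (by omega)
        have h2 : f^[(n2 + (n1 + 1)) * n] ((a.castSucc : Fin (e + 1)), (a.succ.castSucc : Fin (e + 2)))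
            = (Fin.last e, Fin.last (e + 1)) := by
          rw [show (n2 + (n1 + 1)) * n = ((n2 + (n1 + 1)) * n - n) + n by omega,
            Function.iterate_add_apply, hn]
          exact Function.iterate_fixed hfr _
        rw [← h1, h2]
      have h6 := congrArg (fun p : Fin (e + 1) × Fin (e + 2) => (p.2 : ℕ)) hvr
      have h7 := a.isLt
      simp [Fin.val_last] at h6
      omega
    have hw2le : (w.2 : ℕ) ≤ (a : ℕ) + 2 := by
      have := hwA.2.1
      omega
    rcases Nat.lt_or_ge (w.2 : ℕ) ((a : ℕ) + 1) with hcase | hcase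
    · exfalso
      have hwlast : w.2 ≠ Fin.last (e + 1) := hlast_ne w (by have := a.isLt; omega)
      obtain ⟨z, hz, -⟩ := hout w hwA.2.1 hwlast
      have hzA := hA' _ _ hz
      have hz1 := hzA.2.2
      exact hcontra z hzA.2.1 (by omega) (Relation.ReflTransGen.single hz)
    rcases Nat.eq_or_lt_of_le hcase with heq | hgt
    · -- w.2 = a + 1
      have hwpair : w = ((a.succ : Fin (e + 1)), (a.succ.castSucc : Fin (e + 2))) := by
        refine Prod.ext hw1 (Fin.ext ?_)
        simp only [Fin.coe_castSucc, Fin.val_succ]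
        omega
      have hwlast : w.2 ≠ Fin.last (e + 1) := hlast_ne w (by have := a.isLt; omega)
      obtain ⟨w', hw', -⟩ := hout w hwA.2.1 hwlast
      have hw'A := hA' _ _ hw'
      have hw'1 := hw'A.2.2
      have hw'2le : (w'.2 : ℕ) ≤ (a : ℕ) + 2 := by have := hw'A.2.1; omega
      rcases Nat.lt_or_ge (w'.2 : ℕ) ((a : ℕ) + 1) with hc2 | hc2
      · exfalso
        have hw'last : w'.2 ≠ Fin.last (e + 1) := hlast_ne w' (by have := a.isLt; omega)
        obtain ⟨z, hz, -⟩ := hout w' hw'A.2.1 hw'last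
        have hzA := hA' _ _ hz
        have hz1 := hzA.2.2
        exact hcontra z hzA.2.1 (by omega)
          ((Relation.ReflTransGen.single hw').tail hz)
      rcases Nat.eq_or_lt_of_le hc2 with heq2 | hgt2
      · exfalso
        have hww : w' = w := by
          rw [hwpair]
          refine Prod.ext (Fin.ext ?_) (Fin.ext ?_)
          · simp only [Fin.val_succ]; omega
          · simp only [Fin.coe_castSucc, Fin.val_succ]; omega
        exact hloop w (hww ▸ hw')
      · right
        have hw'pair : w' = ((a.succ : Fin (e + 1)), (a.succ.succ : Fin (e + 2))) := by
          refine Prod.ext (Fin.ext ?_) (Fin.ext ?_)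
          · simp only [Fin.val_succ]; omega
          · simp only [Fin.val_succ]; omega
        constructor
        · rw [← hwpair]; exact hw
        · rw [← hwpair, ← hw'pair]; exact hw'
    · left
      have hwpair : w = ((a.succ : Fin (e + 1)), (a.succ.succ : Fin (e + 2))) := by
        refine Prod.ext hw1 (Fin.ext ?_)
        simp only [Fin.val_succ]
        omega
      rw [← hwpair]
      exact hw
  · intro hrhs
    refine ⟨hner, ?_⟩
    have hdiag : ∀ (j : ℕ) (x : Fin (e + 1) × Fin (e + 2)),
        (x.2 : ℕ) = (x.1 : ℕ) + 1 → e - (x.1 : ℕ) ≤ j →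
        Relation.ReflTransGen (fun x y => (x, y) ∈ A) x (Fin.last e, Fin.last (e + 1)) := by
      intro j
      induction j with
      | zero =>
        intro x hx hj
        have h1 := x.1.isLt
        have hxr : x = (Fin.last e, Fin.last (e + 1)) := by
          refine Prod.ext (Fin.ext ?_) (Fin.ext ?_) <;> simp only [Fin.val_last] <;> omega
        rw [hxr]
      | succ j ih =>
        intro x hx hj
        have h1 := x.1.isLt
        by_cases hxe : (x.1 : ℕ) = e
        · have hxr : x = (Fin.last e, Fin.last (e + 1)) := by
            refine Prod.ext (Fin.ext ?_) (Fin.ext ?_) <;> simp only [Fin.val_last] <;> omega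
          rw [hxr]
        · have hlt : (x.1 : ℕ) < e := by omega
          have hxv : x = (((⟨(x.1 : ℕ), hlt⟩ : Fin e).castSucc : Fin (e + 1)),
              ((⟨(x.1 : ℕ), hlt⟩ : Fin e).succ.castSucc : Fin (e + 2))) := by
            refine Prod.ext (Fin.ext ?_) (Fin.ext ?_) <;>
              simp only [Fin.coe_castSucc, Fin.val_succ] <;> omega
          rw [hxv]
          rcases hrhs ⟨(x.1 : ℕ), hlt⟩ with h1' | ⟨h2', h3'⟩
          · refine Relation.ReflTransGen.head h1' (ih _ ?_ ?_)
            · simp [Fin.val_succ]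
            · simp [Fin.val_succ]; omega
          · refine Relation.ReflTransGen.head h2'
              (Relation.ReflTransGen.head h3' (ih _ ?_ ?_))
            · simp [Fin.val_succ]
            · simp [Fin.val_succ]; omega
    intro v hvval
    have hexn : ∃ n, ((f^[n] v).2 : ℕ) = ((f^[n] v).1 : ℕ) + 1 := by
      by_contra hnd
      push_neg at hnd
      have hvalid : ∀ n, ((f^[n] v).2 : ℕ) ≤ ((f^[n] v).1 : ℕ) + 1 := by
        intro n
        induction n with
        | zero => exact hvval
        | succ n ih =>
          have hstep : (f^[n] v, f (f^[n] v)) ∈ A := by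
            apply hkey _ ih
            apply hlast_ne
            have h1 := (f^[n] v).1.isLt
            have h2 := hnd n
            omega
          have h3 := (hA' _ _ hstep).2.1
          rw [Function.iterate_succ_apply']
          exact h3
      have hstepn : ∀ n, (f^[n] v, f^[n + 1] v) ∈ A := by
        intro n
        rw [Function.iterate_succ_apply']
        apply hkey _ (hvalid n)
        apply hlast_ne
        have h1 := (f^[n] v).1.isLt
        have h2 := hnd n
        have h3 := hvalid n
        omega
      have hmono : ∀ n, ((f^[n + 1] v).1 : ℕ) ≤ ((f^[n] v).1 : ℕ) := by
        intro n
        have h3 := hA' _ _ (hstepn n)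
        have h4 := h3.2.2
        have h2 := hnd n
        have h5 := hvalid n
        omega
      have hanti : Antitone (fun n => ((f^[n] v).1 : ℕ)) :=
        antitone_nat_of_succ_le hmono
      have hmain : ∀ i j : ℕ, i < j → f^[i] v = f^[j] v → False := by
        intro i j hij hij2
        have hper : f^[i + (j - i)] v = f^[i] v := by
          rw [show i + (j - i) = j by omega]
          exact hij2.symm
        have hper2 : f^[i + 2 * (j - i)] v = f^[i] v := by
          rw [show i + 2 * (j - i) = (j - i) + (i + (j - i)) by omega,
            Function.iterate_add_apply, hper, ← Function.iterate_add_apply,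
            show (j - i) + i = i + (j - i) by omega, hper]
        have l1 : ((f^[i + 1] v).1 : ℕ) ≤ ((f^[i] v).1 : ℕ) := hanti (by omega)
        have l2 : ((f^[i + 2] v).1 : ℕ) ≤ ((f^[i + 1] v).1 : ℕ) := hanti (by omega)
        have l3 : ((f^[i + 2 * (j - i)] v).1 : ℕ) ≤ ((f^[i + 2] v).1 : ℕ) := hanti (by omega)
        have l4 : ((f^[i + 2 * (j - i)] v).1 : ℕ) = ((f^[i] v).1 : ℕ) := by rw [hper2]
        have s1 := hstepn i
        have s2 : (f^[i + 1] v, f^[i + 2] v) ∈ A := by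
          have := hstepn (i + 1)
          rwa [show i + 1 + 1 = i + 2 by omega] at this
        have q1 := (hA' _ _ s1).2.2
        have q2 := (hA' _ _ s2).2.2
        have hxy : f^[i] v = f^[i + 1] v := by
          refine Prod.ext (Fin.ext ?_) (Fin.ext ?_) <;> omega
        exact hloop _ (hxy ▸ s1)
      obtain ⟨i, j, hne, hijeq⟩ :=
        Finite.exists_ne_map_eq_of_infinite (fun n : ℕ => f^[n] v)
      rcases hne.lt_or_gt with h | h
      · exact hmain i j h hijeq
      · exact hmain j i h hijeq.symm
    obtain ⟨n, hn⟩ := hexn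
    exact (hreach_iter n v).trans (hdiag e _ hn (by omega))
end
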